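/- Suppose the past assortments are nested with S_M = N₀, let η ≥ 0, assume the uncertainty set U_η is nonempty, and let S ⊆ N₀ satisfy S ∩ S_1 ≠ ∅. Then inf_{λ ∈ U_η} R^λ(S) equals the infimum of Σ_{(i,κ) : (M,i,κ) ∈ 𝔙} κ·g(M,i,κ) over all functions f : 𝔈 → ℝ and g : 𝔙 → ℝ satisfying: f ≥ 0 and g ≥ 0; |Σ_{κ : (m,i,κ) ∈ 𝔙} g(m,i,κ) − v_{m,i}| ≤ η for every m ∈ {1,…,M} and every i ∈ S_m; Σ_{(i′,κ′) : ((m,i,κ),(m+1,i′,κ′)) ∈ 𝔈} f((m,i,κ),(m+1,i′,κ′)) = g(m,i,κ) for every (m,i,κ) ∈ 𝔙 with m ∈ {1,…,M−1}; Σ_{(i′,κ′) : ((m−1,i′,κ′),(m,i,κ)) ∈ 𝔈} f((m−1,i′,κ′),(m,i,κ)) = g(m,i,κ) for every (m,i,κ) ∈ 𝔙 with m ∈ {2,…,M}; g(m,i,κ) = 0 for every (m,i,κ) ∈ 𝔙 with i ∈ S, i ∈ B_m and κ ≠ r(i); g(m,i,κ) = 0 for every (m,i,κ) ∈ 𝔙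 with i ∈ S, i ∉ B_m and κ ∈ {r(j) : j ∈ B_m}; g(m,i,κ) = 0 for every (m,i,κ) ∈ 𝔙 with κ ∈ {r(j) : j ∈ B_m \ S}; and Σ_{(i,κ) : (M,i,κ) ∈ 𝔙} g(M,i,κ) = 1. -/
import Mathlib


namespace RobustAssortment

/-- `i` is the most preferred product of the assortment `S` under the ranking `σ`. -/
def isTop {n : ℕ} (σ : Equiv.Perm (Fin (n + 1))) (S : Finset (Fin (n + 1)))
    (i : Fin (n + 1)) : Prop :=
  i ∈ S ∧ ∀ j ∈ S, σ i ≤ σ j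

instance {n : ℕ} (σ : Equiv.Perm (Fin (n + 1))) (S : Finset (Fin (n + 1)))
    (i : Fin (n + 1)) : Decidable (isTop σ S i) := by
  unfold isTop; infer_instance
/-- A ranking-based choice model: nonnegative weights on rankings summing to one. -/
def IsChoiceModel {n : ℕ} (lam : Equiv.Perm (Fin (n + 1)) → ℝ) : Prop :=
  (∀ σ, 0 ≤ lam σ) ∧ ∑ σ : Equiv.Perm (Fin (n + 1)), lam σ = 1

/-- Choice probability `D^λ_i(S)`. -/
noncomputable def choiceProb {n : ℕ} (lam : Equiv.Perm (Fin (n + 1)) → ℝ)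
    (S : Finset (Fin (n + 1))) (i : Fin (n + 1)) : ℝ :=
  ∑ σ : Equiv.Perm (Fin (n + 1)), if isTop σ S i then lam σ else 0

/-- Expected revenue `R^λ(S)`. -/
noncomputable def expRev {n : ℕ} (r : Fin (n + 1) → ℝ)
    (lam : Equiv.Perm (Fin (n + 1)) → ℝ) (S : Finset (Fin (n + 1))) : ℝ :=
  ∑ i ∈ S, r i * choiceProb lam S i

/-- The uncertainty set `U_η` of choice models consistent with the sales data. -/
def Uset {n M : ℕ} (Sm : Fin M → Finset (Fin (n + 1)))
    (v : Fin M → Fin (n + 1) → ℝ) (η : ℝ) :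
    Set (Equiv.Perm (Fin (n + 1)) → ℝ) :=
  {lam | IsChoiceModel lam ∧
    ∀ m : Fin M, ∀ i ∈ Sm m, |choiceProb lam (Sm m) i - v m i| ≤ η}

/-- Worst-case expected revenue `inf_{λ ∈ U_η} R^λ(S)`. -/
noncomputable def wcRev {n M : ℕ} (Sm : Fin M → Finset (Fin (n + 1)))
    (v : Fin M → Fin (n + 1) → ℝ) (η : ℝ) (r : Fin (n + 1) → ℝ)
    (S : Finset (Fin (n + 1))) : ℝ :=
  sInf {x | ∃ lam ∈ Uset Sm v η, x = expRev r lam S}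

/-- The set `B_m`: products appearing in `S_m` but in no earlier past assortment.
(For nested assortments, `B_1 = S_1` and `B_m = S_m \ S_{m-1}` for `m ≥ 2`.) -/
def Bm {n M : ℕ} (Sm : Fin M → Finset (Fin (n + 1))) (m : Fin M) :
    Finset (Fin (n + 1)) :=
  if (m : ℕ) = 0 then Sm m
  else Sm m \ Sm ⟨(m : ℕ) - 1, lt_of_le_of_lt (Nat.sub_le _ _) m.isLt⟩

/-- Vertex membership in `𝔙`: the vertex `(m, i, κ)` with `κ = r k` is in `𝔙` iff
`i ∈ S_m` and `k ∈ S_m` (so that `κ ∈ {r j : j ∈ S_m}`). -/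
def Vmem {n M : ℕ} (Sm : Fin M → Finset (Fin (n + 1))) (m : Fin M)
    (i k : Fin (n + 1)) : Prop :=
  i ∈ Sm m ∧ k ∈ Sm m

/-- Edge membership in `𝔈`: a directed edge from vertex `(m, i, r k)` to
vertex `(m', i', r k')` with `m' = m + 1`, `i' ∈ {i} ∪ B_{m+1}` and
`r k' ∈ {r k} ∪ {r j : j ∈ B_{m+1}}`. -/
def Emem {n M : ℕ} (Sm : Fin M → Finset (Fin (n + 1))) (r : Fin (n + 1) → ℝ)
    (m : Fin M) (i k : Fin (n + 1)) (m' : Fin M) (i' k' : Fin (n + 1)) : Prop :=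
  Vmem Sm m i k ∧ Vmem Sm m' i' k' ∧ (m' : ℕ) = (m : ℕ) + 1 ∧
    (i' = i ∨ i' ∈ Bm Sm m') ∧ (r k' = r k ∨ ∃ j ∈ Bm Sm m', r k' = r j)

attribute [local instance] Classical.propDecidable

attribute [local instance] Classical.propDecidable

attribute [local instance] Classical.propDecidable

section Tops
variable {n : ℕ} {σ : Equiv.Perm (Fin (n + 1))} {T T' : Finset (Fin (n + 1))}
  {i j : Fin (n + 1)}

lemma isTop_unique (h1 : isTop σ T i) (h2 : isTop σ T j) : i = j :=
  σ.injective (le_antisymm (h1.2 j h2.1) (h2.2 i h1.1))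

lemma exists_isTop (σ : Equiv.Perm (Fin (n + 1))) (hT : T.Nonempty) :
    ∃ i, isTop σ T i := by
  obtain ⟨b, hb, hmin⟩ := T.exists_min_image σ hT
  exact ⟨b, hb, hmin⟩

noncomputable def topOf (σ : Equiv.Perm (Fin (n + 1))) (T : Finset (Fin (n + 1)))
    (hT : T.Nonempty) : Fin (n + 1) :=
  Classical.choose (exists_isTop σ hT)

lemma isTop_topOf (σ : Equiv.Perm (Fin (n + 1))) (hT : T.Nonempty) :
    isTop σ T (topOf σ T hT) := Classical.choose_spec (exists_isTop σ hT)

lemma topOf_mem (σ : Equiv.Perm (Fin (n + 1))) (hT : T.Nonempty) :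
    topOf σ T hT ∈ T := (isTop_topOf σ hT).1

lemma isTop_iff_eq_topOf (hT : T.Nonempty) : isTop σ T i ↔ i = topOf σ T hT :=
  ⟨fun h => isTop_unique h (isTop_topOf σ hT), fun h => h ▸ isTop_topOf σ hT⟩

lemma topOf_congr (hT : T.Nonempty) (hT' : T'.Nonempty) (h : T = T') :
    topOf σ T hT = topOf σ T' hT' := by subst h; rfl

/-- If the top of a larger set belongs to a smaller subset, it is the top of the
smaller set. -/
lemma topOf_eq_of_mem (hT : T.Nonempty) (hT' : T'.Nonempty) (hsub : T ⊆ T')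
    (hmem : topOf σ T' hT' ∈ T) : topOf σ T' hT' = topOf σ T hT := by
  refine isTop_unique ⟨hmem, fun j hj => (isTop_topOf σ hT').2 j (hsub hj)⟩ (isTop_topOf σ hT)

end Tops

section Key
variable {n : ℕ}

lemma exists_perm_of_key (key : Fin (n + 1) → ℕ) (hkey : Function.Injective key) :
    ∃ σ : Equiv.Perm (Fin (n + 1)), ∀ a b, σ a ≤ σ b ↔ key a ≤ key b := by
  classical
  set s : Finset ℕ := Finset.image key Finset.univ with hs
  have hcard : s.card = n + 1 := by
    rw [hs, Finset.card_image_of_injective _ hkey, Finset.card_univ, Fintype.card_fin]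
  set e := s.orderIsoOfFin hcard with he
  have hmem : ∀ a, key a ∈ s := fun a => Finset.mem_image_of_mem _ (Finset.mem_univ a)
  set φ : Fin (n + 1) → Fin (n + 1) := fun a => e.symm ⟨key a, hmem a⟩ with hφ
  have hinj : Function.Injective φ := by
    intro a b hab
    have := e.symm.injective hab
    exact hkey (congrArg Subtype.val this)
  refine ⟨Equiv.ofBijective φ (Finite.injective_iff_bijective.mp hinj), fun a b => ?_⟩
  show φ a ≤ φ b ↔ _
  rw [hφ]
  simp only [e.symm.le_iff_le]
  rfl

end Key

section Chain
set_option linter.unusedSectionVars false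
set_option linter.unusedVariables false
variable {V : Type*} [Fintype V] [DecidableEq V]

/-- Forward marginals of a (sub)Markov chain. -/
noncomputable def chainMu (mu0 : V → ℝ) (T : ℕ → V → V → ℝ) : ℕ → V → ℝ
  | 0 => mu0
  | (m + 1) => fun y => ∑ x, chainMu mu0 T m x * T m x y

/-- Weight of a path of length `N`. -/
noncomputable def pathW (mu0 : V → ℝ) (T : ℕ → V → V → ℝ) (N : ℕ)
    (p : Fin (N + 1) → V) : ℝ :=
  mu0 (p 0) * ∏ m : Fin N, T m (p m.castSucc) (p m.succ)

/-- Splitting a path space at the last coordinate. -/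
def snocEquiv (V : Type*) (N : ℕ) : (Fin (N + 1) → V) ≃ (Fin N → V) × V where
  toFun p := (fun m => p m.castSucc, p (Fin.last N))
  invFun q := Fin.snoc q.1 q.2
  left_inv p := by
    funext m
    refine Fin.lastCases ?_ (fun m => ?_) m
    · simp [Fin.snoc_last]
    · simp [Fin.snoc_castSucc]
  right_inv q := by
    refine Prod.ext ?_ ?_
    · funext m; simp [Fin.snoc_castSucc]
    · simp [Fin.snoc_last]

lemma pathW_snoc (mu0 : V → ℝ) (T : ℕ → V → V → ℝ) (N : ℕ)
    (q : Fin (N + 1) → V) (y : V) :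
    pathW mu0 T (N + 1) (Fin.snoc q y) =
      pathW mu0 T N q * T N (q (Fin.last N)) y := by
  unfold pathW
  have h0 : (Fin.snoc q y : Fin (N + 2) → V) 0 = q 0 := by
    rw [show (0 : Fin (N + 2)) = (0 : Fin (N + 1)).castSucc from rfl, Fin.snoc_castSucc]
  rw [Fin.prod_univ_castSucc, h0]
  simp only [Fin.coe_castSucc, Fin.succ_castSucc, Fin.snoc_castSucc, Fin.succ_last,
    Fin.snoc_last, Fin.val_last]
  ring

lemma sum_snoc (N : ℕ) (F : (Fin (N + 2) → V) → ℝ) :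
    ∑ p : Fin (N + 2) → V, F p =
      ∑ q : Fin (N + 1) → V, ∑ y : V, F (Fin.snoc q y) := by
  rw [← Fintype.sum_prod_type']
  exact Fintype.sum_equiv (snocEquiv V (N + 1)) F (fun z => F (Fin.snoc z.1 z.2))
    (fun p => by congr 1; exact ((snocEquiv V (N + 1)).left_inv p).symm)

/-- Final-coordinate marginal. -/
lemma chain_final (mu0 : V → ℝ) (T : ℕ → V → V → ℝ) :
    ∀ (N : ℕ) (χ : V → ℝ),
      ∑ p : Fin (N + 1) → V, pathW mu0 T N p * χ (p (Fin.last N)) =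
        ∑ x, chainMu mu0 T N x * χ x := by
  intro N
  induction N with
  | zero =>
    intro χ
    apply Fintype.sum_equiv (Equiv.funUnique (Fin 1) V)
    intro p
    simp [pathW, chainMu, Equiv.funUnique]
  | succ N ih =>
    intro χ
    rw [sum_snoc]
    have key : ∀ q : Fin (N + 1) → V,
        ∑ y, pathW mu0 T (N+1) (Fin.snoc q y) *
          χ ((Fin.snoc q y : Fin (N+2) → V) (Fin.last (N+1)))
        = pathW mu0 T N q * (∑ y, T N (q (Fin.last N)) y * χ y) := by
      intro q
      rw [Finset.mul_sum]
      refine Finset.sum_congr rfl (fun y _ => ?_)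
      rw [pathW_snoc, Fin.snoc_last]
      ring
    rw [Finset.sum_congr rfl (fun q _ => key q),
      ih (fun x => ∑ y, T N x y * χ y)]
    have lhs : ∀ x, chainMu mu0 T N x * (∑ y, T N x y * χ y)
        = ∑ y, chainMu mu0 T N x * T N x y * χ y := by
      intro x; rw [Finset.mul_sum]; exact Finset.sum_congr rfl fun y _ => by ring
    rw [Finset.sum_congr rfl fun x _ => lhs x, Finset.sum_comm]
    refine Finset.sum_congr rfl fun y _ => ?_
    have : chainMu mu0 T (N+1) y = ∑ x, chainMu mu0 T N x * T N x y := rfl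
    rw [this, Finset.sum_mul]

lemma chainMu_nonneg (mu0 : V → ℝ) (T : ℕ → V → V → ℝ)
    (hmu0 : ∀ x, 0 ≤ mu0 x) (hT : ∀ m x y, 0 ≤ T m x y) :
    ∀ m x, 0 ≤ chainMu mu0 T m x := by
  intro m
  induction m with
  | zero => exact hmu0
  | succ m ih =>
    intro y
    exact Finset.sum_nonneg fun x _ => mul_nonneg (ih x) (hT m x y)

lemma pathW_nonneg (mu0 : V → ℝ) (T : ℕ → V → V → ℝ)
    (hmu0 : ∀ x, 0 ≤ mu0 x) (hT : ∀ m x y, 0 ≤ T m x y) (N : ℕ)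
    (p : Fin (N + 1) → V) : 0 ≤ pathW mu0 T N p :=
  mul_nonneg (hmu0 _) (Finset.prod_nonneg fun m _ => hT _ _ _)

/-- Support of a path weight sits inside the support of the forward marginal. -/
lemma chainMu_ne_zero_of_pathW (mu0 : V → ℝ) (T : ℕ → V → V → ℝ)
    (hmu0 : ∀ x, 0 ≤ mu0 x) (hT : ∀ m x y, 0 ≤ T m x y) :
    ∀ (N : ℕ) (p : Fin (N + 1) → V), pathW mu0 T N p ≠ 0 →
      chainMu mu0 T N (p (Fin.last N)) ≠ 0 := by
  intro N
  induction N with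
  | zero =>
    intro p hp
    have : mu0 (p 0) ≠ 0 := by
      intro h; apply hp; unfold pathW; rw [h]; ring
    simpa [chainMu] using this
  | succ N ih =>
    intro p hp
    set q : Fin (N + 1) → V := fun m => p m.castSucc with hq
    have hps : p = Fin.snoc q (p (Fin.last (N + 1))) := by
      funext m
      refine Fin.lastCases ?_ (fun m => ?_) m
      · rw [Fin.snoc_last]
      · rw [Fin.snoc_castSucc]
    rw [hps, pathW_snoc] at hp
    have h1 : pathW mu0 T N q ≠ 0 := fun h => hp (by rw [h]; ring)
    have h2 : T N (q (Fin.last N)) (p (Fin.last (N + 1))) ≠ 0 :=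
      fun h => hp (by rw [h]; ring)
    have hle : chainMu mu0 T N (q (Fin.last N)) * T N (q (Fin.last N)) (p (Fin.last (N+1)))
        ≤ chainMu mu0 T (N + 1) (p (Fin.last (N + 1))) := by
      show _ ≤ ∑ x, chainMu mu0 T N x * T N x (p (Fin.last (N+1)))
      exact Finset.single_le_sum
        (f := fun x => chainMu mu0 T N x * T N x (p (Fin.last (N+1))))
        (fun x _ => mul_nonneg (chainMu_nonneg mu0 T hmu0 hT N x) (hT _ _ _))
        (Finset.mem_univ _)
    have hpos : 0 < chainMu mu0 T N (q (Fin.last N)) *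
        T N (q (Fin.last N)) (p (Fin.last (N+1))) :=
      mul_pos (lt_of_le_of_ne (chainMu_nonneg mu0 T hmu0 hT N _) (Ne.symm (ih q h1)))
        (lt_of_le_of_ne (hT _ _ _) (Ne.symm h2))
    exact (lt_of_lt_of_le hpos hle).ne'

/-- Marginal at an arbitrary coordinate. -/
lemma chain_marginal (mu0 : V → ℝ) (T : ℕ → V → V → ℝ)
    (hmu0 : ∀ x, 0 ≤ mu0 x) (hT : ∀ m x y, 0 ≤ T m x y) :
    ∀ (N : ℕ), (∀ m x, m < N → chainMu mu0 T m x ≠ 0 → ∑ y, T m x y = 1) →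
    ∀ (m : ℕ) (hm : m ≤ N) (χ : V → ℝ),
      ∑ p : Fin (N + 1) → V, pathW mu0 T N p * χ (p ⟨m, Nat.lt_succ_of_le hm⟩) =
        ∑ x, chainMu mu0 T m x * χ x := by
  intro N
  induction N with
  | zero =>
    intro _ m hm χ
    interval_cases m
    exact chain_final mu0 T 0 χ
  | succ N ih =>
    intro hsum m hm χ
    rcases Nat.lt_or_ge m (N + 1) with h | h
    · have hm' : m ≤ N := Nat.lt_succ_iff.mp h
      rw [sum_snoc]
      have key : ∀ q : Fin (N + 1) → V,
          ∑ y, pathW mu0 T (N+1) (Fin.snoc q y) *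
            χ ((Fin.snoc q y : Fin (N+2) → V) ⟨m, Nat.lt_succ_of_le hm⟩)
          = pathW mu0 T N q * χ (q ⟨m, Nat.lt_succ_of_le hm'⟩) := by
        intro q
        have hcast : (⟨m, Nat.lt_succ_of_le hm⟩ : Fin (N + 2)) =
            (⟨m, Nat.lt_succ_of_le hm'⟩ : Fin (N + 1)).castSucc := rfl
        have hterm : ∀ y, pathW mu0 T (N+1) (Fin.snoc q y) *
            χ ((Fin.snoc q y : Fin (N+2) → V) ⟨m, Nat.lt_succ_of_le hm⟩)
            = pathW mu0 T N q * T N (q (Fin.last N)) y * χ (q ⟨m, Nat.lt_succ_of_le hm'⟩) := by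
          intro y
          rw [pathW_snoc, hcast, Fin.snoc_castSucc]
        rw [Finset.sum_congr rfl (fun y _ => hterm y)]
        rw [← Finset.sum_mul, ← Finset.mul_sum]
        by_cases hq : pathW mu0 T N q = 0
        · rw [hq]; ring
        · rw [hsum N (q (Fin.last N)) (Nat.lt_succ_self N)
            (chainMu_ne_zero_of_pathW mu0 T hmu0 hT N q hq)]
          ring
      rw [Finset.sum_congr rfl (fun q _ => key q)]
      exact ih (fun m x hm hx => hsum m x (hm.trans (Nat.lt_succ_self N)) hx) m hm' χ
    · have hm' : m = N + 1 := le_antisymm hm h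
      subst hm'
      have : (⟨N + 1, Nat.lt_succ_of_le hm⟩ : Fin (N + 2)) = Fin.last (N + 1) := rfl
      rw [this]
      exact chain_final mu0 T (N + 1) χ

end Chain

section Realize
set_option linter.unusedSectionVars false
set_option linter.unusedVariables false
variable {n M : ℕ}

/-- Last level at which `x` takes the value `j`. -/
noncomputable def tIF (x : Fin M → Fin (n + 1)) (j : Fin (n + 1)) : ℕ :=
  Finset.sup (Finset.univ.filter fun m => x m = j) (fun m => (m : ℕ))

/-- First level at which `x` takes the value `j`. -/
noncomputable def aKF (x : Fin M → Fin (n + 1)) (j : Fin (n + 1)) : ℕ :=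
  if h : (Finset.univ.filter fun m => x m = j).Nonempty
  then (((Finset.univ.filter fun m => x m = j).min' h : Fin M) : ℕ) else 0

lemma tIF_le {x : Fin M → Fin (n + 1)} {j : Fin (n + 1)} (m : Fin M) (h : x m = j) :
    (m : ℕ) ≤ tIF x j :=
  Finset.le_sup (by simp [h])

lemma tIF_attain {x : Fin M → Fin (n + 1)} {j : Fin (n + 1)} (hj : ∃ m, x m = j) :
    ∃ hh : tIF x j < M, x ⟨tIF x j, hh⟩ = j := by
  obtain ⟨m, hm⟩ := hj
  have hne : (Finset.univ.filter fun m => x m = j).Nonempty := ⟨m, by simp [hm]⟩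
  obtain ⟨b, hb, hsup⟩ := Finset.exists_mem_eq_sup _ hne (fun m : Fin M => (m : ℕ))
  have hval : tIF x j = (b : ℕ) := hsup
  have hlt : tIF x j < M := by rw [hval]; exact b.isLt
  refine ⟨hlt, ?_⟩
  have : (⟨tIF x j, hlt⟩ : Fin M) = b := Fin.ext hval
  rw [this]
  exact (Finset.mem_filter.mp hb).2

lemma aKF_le {x : Fin M → Fin (n + 1)} {j : Fin (n + 1)} (m : Fin M) (h : x m = j) :
    aKF x j ≤ (m : ℕ) := by
  have hne : (Finset.univ.filter fun m => x m = j).Nonempty := ⟨m, by simp [h]⟩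
  rw [aKF, dif_pos hne]
  exact Fin.le_def.mp (Finset.min'_le _ m (by simp [h]))

lemma aKF_attain {x : Fin M → Fin (n + 1)} {j : Fin (n + 1)} (hj : ∃ m, x m = j) :
    ∃ hh : aKF x j < M, x ⟨aKF x j, hh⟩ = j := by
  obtain ⟨m, hm⟩ := hj
  have hne : (Finset.univ.filter fun m => x m = j).Nonempty := ⟨m, by simp [hm]⟩
  have hmem := Finset.min'_mem _ hne
  have hval : aKF x j = (((Finset.univ.filter fun m => x m = j).min' hne : Fin M) : ℕ) := by
    rw [aKF, dif_pos hne]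
  have hlt : aKF x j < M := by rw [hval]; exact Fin.isLt _
  refine ⟨hlt, ?_⟩
  have : (⟨aKF x j, hlt⟩ : Fin M) = (Finset.univ.filter fun m => x m = j).min' hne :=
    Fin.ext hval
  rw [this]
  exact (Finset.mem_filter.mp hmem).2

/-- Ranking key associated to a path. -/
noncomputable def keyF (p : Fin M → Fin (n + 1) × Fin (n + 1)) (j : Fin (n + 1)) : ℕ :=
  if ∃ m, (p m).1 = j then 2 * (M - 1 - tIF (fun m => (p m).1) j)
  else if ∃ m, (p m).2 = j then 2 * (M - 1 - aKF (fun m => (p m).2) j) + 1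
  else 2 * M + 2 + (j : ℕ)

/-- A path that satisfies the combinatorial constraints is realized by some ranking. -/
lemma realize_exists (Sm : Fin M → Finset (Fin (n + 1)))
    (hmono : ∀ m m' : Fin M, m ≤ m' → Sm m ⊆ Sm m')
    (S : Finset (Fin (n + 1)))
    (p : Fin M → Fin (n + 1) × Fin (n + 1))
    (hi1 : ∀ m, (p m).1 ∈ Sm m)
    (hk1 : ∀ m, (p m).2 ∈ Sm m)
    (hkS : ∀ m, (p m).2 ∈ S)
    (hstepI : ∀ (m : ℕ) (h : m + 1 < M),
      (p ⟨m + 1, h⟩).1 = (p ⟨m, Nat.lt_of_succ_lt h⟩).1 ∨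
        (p ⟨m + 1, h⟩).1 ∉ Sm ⟨m, Nat.lt_of_succ_lt h⟩)
    (hstepK : ∀ (m : ℕ) (h : m + 1 < M),
      (p ⟨m + 1, h⟩).2 = (p ⟨m, Nat.lt_of_succ_lt h⟩).2 ∨
        (p ⟨m + 1, h⟩).2 ∉ Sm ⟨m, Nat.lt_of_succ_lt h⟩)
    (hik : ∀ m, (p m).1 ∈ S → (p m).2 = (p m).1) :
    ∃ σ : Equiv.Perm (Fin (n + 1)), ∀ m : Fin M,
      isTop σ (Sm m) (p m).1 ∧ isTop σ (S ∩ Sm m) (p m).2 := by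
  classical
  have F1 : ∀ (x : Fin M → Fin (n + 1)),
      (∀ (m : ℕ) (h : m + 1 < M), x ⟨m + 1, h⟩ = x ⟨m, Nat.lt_of_succ_lt h⟩ ∨
        x ⟨m + 1, h⟩ ∉ Sm ⟨m, Nat.lt_of_succ_lt h⟩) →
      ∀ (a b : ℕ) (ha : a < M) (hb : b < M), a ≤ b →
        x ⟨b, hb⟩ ∈ Sm ⟨a, ha⟩ → x ⟨b, hb⟩ = x ⟨a, ha⟩ := by
    intro x hstep a b ha
    induction b with
    | zero =>
      intro hb hab hmem
      obtain rfl : a = 0 := Nat.le_zero.mp hab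
      rfl
    | succ b ih =>
      intro hb hab hmem
      rcases Nat.lt_or_ge a (b + 1) with hlt | hge
      · have hab' : a ≤ b := Nat.lt_succ_iff.mp hlt
        have hb' : b < M := Nat.lt_of_succ_lt hb
        rcases hstep b hb with heq | hnot
        · rw [heq] at hmem ⊢
          exact ih hb' hab' hmem
        · exact absurd (hmono ⟨a, ha⟩ ⟨b, hb'⟩ (Fin.mk_le_mk.mpr hab') hmem) hnot
      · obtain rfl : a = b + 1 := le_antisymm hab hge
        rfl
  have F1i : ∀ a b : Fin M, a ≤ b → (p b).1 ∈ Sm a → (p b).1 = (p a).1 := by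
    intro a b hab hmem
    have := F1 (fun m => (p m).1) hstepI a b a.isLt b.isLt (by exact_mod_cast hab)
      (by simpa [Fin.eta] using hmem)
    simpa [Fin.eta] using this
  have F1k : ∀ a b : Fin M, a ≤ b → (p b).2 ∈ Sm a → (p b).2 = (p a).2 := by
    intro a b hab hmem
    have := F1 (fun m => (p m).2) hstepK a b a.isLt b.isLt (by exact_mod_cast hab)
      (by simpa [Fin.eta] using hmem)
    simpa [Fin.eta] using this
  -- R1 : the first component is minimal for the key in `Sm m`.
  have R1 : ∀ (m : Fin M) (j : Fin (n + 1)), j ∈ Sm m → j ≠ (p m).1 →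
      keyF p (p m).1 < keyF p j := by
    intro m j hjm hne
    have hI : ∃ m', (p m').1 = (p m).1 := ⟨m, rfl⟩
    have hm_le : (m : ℕ) ≤ tIF (fun m' => (p m').1) (p m).1 := tIF_le m rfl
    obtain ⟨htIlt, htIat⟩ := tIF_attain hI
    simp only [keyF]
    rw [if_pos hI]
    by_cases hIj : ∃ m', (p m').1 = j
    · rw [if_pos hIj]
      obtain ⟨hlt, hat⟩ := tIF_attain hIj
      have hlt2 : tIF (fun m' => (p m').1) j < (m : ℕ) := by
        by_contra hge
        push_neg at hge
        have := F1i m ⟨tIF (fun m' => (p m').1) j, hlt⟩ (Fin.le_def.mpr hge)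
          (by rw [hat]; exact hjm)
        rw [hat] at this
        exact hne this
      omega
    · rw [if_neg hIj]
      by_cases hKj : ∃ m', (p m').2 = j
      · rw [if_pos hKj]
        obtain ⟨halt, haat⟩ := aKF_attain hKj
        have haK : aKF (fun m' => (p m').2) j ≤ (m : ℕ) := by
          rcases le_or_gt (aKF (fun m' => (p m').2) j) (m : ℕ) with h | h
          · exact h
          · have := F1k m ⟨aKF (fun m' => (p m').2) j, halt⟩ (Fin.le_def.mpr (le_of_lt h))
              (by rw [haat]; exact hjm)
            rw [haat] at this
            exact absurd (aKF_le (x := fun m' => (p m').2) m this.symm) (by omega)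
        omega
      · rw [if_neg hKj]
        omega
  -- R2 : the second component is minimal for the key in `S ∩ Sm m`.
  have R2 : ∀ (m : Fin M) (j : Fin (n + 1)), j ∈ S → j ∈ Sm m → j ≠ (p m).2 →
      keyF p (p m).2 < keyF p j := by
    intro m j hjS hjm hne
    have hKc : ∃ m', (p m').2 = (p m).2 := ⟨m, rfl⟩
    have haKc_le : aKF (fun m' => (p m').2) (p m).2 ≤ (m : ℕ) := aKF_le m rfl
    obtain ⟨haclt, hacat⟩ := aKF_attain hKc
    have hcS : (p m).2 ∈ S := hkS m
    have hIcase : ∀ _ : (∃ m', (p m').1 = (p m).2),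
        aKF (fun m' => (p m').2) (p m).2 ≤ tIF (fun m' => (p m').1) (p m).2 := by
      intro hIc
      obtain ⟨hlt, hat⟩ := tIF_attain hIc
      have : (p ⟨tIF (fun m' => (p m').1) (p m).2, hlt⟩).2 = (p m).2 := by
        rw [hik ⟨tIF (fun m' => (p m').1) (p m).2, hlt⟩ (by rw [hat]; exact hcS)]
        exact hat
      exact aKF_le (x := fun m' => (p m').2) _ this
    simp only [keyF]
    by_cases hIj : ∃ m', (p m').1 = j
    · -- j is a first component; since j ∈ S it is also a second component at that level
      obtain ⟨hlt, hat⟩ := tIF_attain hIj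
      have hkj : (p ⟨tIF (fun m' => (p m').1) j, hlt⟩).2 = j := by
        rw [hik ⟨tIF (fun m' => (p m').1) j, hlt⟩ (by rw [hat]; exact hjS)]
        exact hat
      have ht_lt_m : tIF (fun m' => (p m').1) j < (m : ℕ) := by
        by_contra hge
        push_neg at hge
        have h1 := F1i m ⟨tIF (fun m' => (p m').1) j, hlt⟩ (Fin.le_def.mpr hge)
          (by rw [hat]; exact hjm)
        rw [hat] at h1
        have h2 := hik m (by rw [← h1]; exact hjS)
        rw [← h1] at h2
        exact hne h2.symm
      have ht_lt_a : tIF (fun m' => (p m').1) j < aKF (fun m' => (p m').2) (p m).2 := by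
        by_contra hge
        push_neg at hge
        have hc_mem : (p m).2 ∈ Sm ⟨tIF (fun m' => (p m').1) j, hlt⟩ := by
          have h1 : (p ⟨aKF (fun m' => (p m').2) (p m).2, haclt⟩).2
              ∈ Sm ⟨aKF (fun m' => (p m').2) (p m).2, haclt⟩ := hk1 _
          rw [hacat] at h1
          exact hmono _ _ (Fin.mk_le_mk.mpr hge) h1
        have := F1k ⟨tIF (fun m' => (p m').1) j, hlt⟩ m (Fin.le_def.mpr (le_of_lt ht_lt_m))
          hc_mem
        rw [hkj] at this
        exact hne this.symm
      rw [if_pos hIj]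
      by_cases hIc : ∃ m', (p m').1 = (p m).2
      · rw [if_pos hIc]
        have h3 := hIcase hIc
        obtain ⟨hlt2, _⟩ := tIF_attain hIc
        omega
      · rw [if_neg hIc, if_pos hKc]
        omega
    · rw [if_neg hIj]
      by_cases hKj : ∃ m', (p m').2 = j
      · -- j is a second component only
        rw [if_pos hKj]
        obtain ⟨hajlt, hajat⟩ := aKF_attain hKj
        have haj_le : aKF (fun m' => (p m').2) j ≤ (m : ℕ) := by
          rcases le_or_gt (aKF (fun m' => (p m').2) j) (m : ℕ) with h | h
          · exact h
          · have := F1k m ⟨aKF (fun m' => (p m').2) j, hajlt⟩ (Fin.le_def.mpr (le_of_lt h))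
              (by rw [hajat]; exact hjm)
            rw [hajat] at this
            exact absurd (aKF_le (x := fun m' => (p m').2) m this.symm) (by omega)
        have haj_lt : aKF (fun m' => (p m').2) j < aKF (fun m' => (p m').2) (p m).2 := by
          by_contra hge
          push_neg at hge
          have hc_mem : (p m).2 ∈ Sm ⟨aKF (fun m' => (p m').2) j, hajlt⟩ := by
            have h1 : (p ⟨aKF (fun m' => (p m').2) (p m).2, haclt⟩).2
                ∈ Sm ⟨aKF (fun m' => (p m').2) (p m).2, haclt⟩ := hk1 _
            rw [hacat] at h1
            exact hmono _ _ (Fin.mk_le_mk.mpr hge) h1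
          have := F1k ⟨aKF (fun m' => (p m').2) j, hajlt⟩ m (Fin.le_def.mpr haj_le) hc_mem
          rw [hajat] at this
          exact hne this.symm
        by_cases hIc : ∃ m', (p m').1 = (p m).2
        · rw [if_pos hIc]
          have h3 := hIcase hIc
          obtain ⟨hlt2, _⟩ := tIF_attain hIc
          omega
        · rw [if_neg hIc, if_pos hKc]
          omega
      · rw [if_neg hKj]
        by_cases hIc : ∃ m', (p m').1 = (p m).2
        · rw [if_pos hIc]
          obtain ⟨hlt2, _⟩ := tIF_attain hIc
          omega
        · rw [if_neg hIc, if_pos hKc]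
          omega
  -- the key is injective
  have keyinj : Function.Injective (keyF p) := by
    intro a b hab
    simp only [keyF] at hab
    by_cases hIa : ∃ m', (p m').1 = a
    · obtain ⟨hlta, hata⟩ := tIF_attain hIa
      rw [if_pos hIa] at hab
      by_cases hIb : ∃ m', (p m').1 = b
      · obtain ⟨hltb, hatb⟩ := tIF_attain hIb
        rw [if_pos hIb] at hab
        have heq : tIF (fun m' => (p m').1) a = tIF (fun m' => (p m').1) b := by omega
        have hfin : (⟨tIF (fun m' => (p m').1) a, hlta⟩ : Fin M)
            = ⟨tIF (fun m' => (p m').1) b, hltb⟩ := Fin.ext heq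
        rw [← hata, ← hatb, hfin]
      · rw [if_neg hIb] at hab
        by_cases hKb : ∃ m', (p m').2 = b
        · rw [if_pos hKb] at hab
          omega
        · rw [if_neg hKb] at hab
          omega
    · by_cases hKa : ∃ m', (p m').2 = a
      · obtain ⟨hlta, hata⟩ := aKF_attain hKa
        rw [if_neg hIa, if_pos hKa] at hab
        by_cases hIb : ∃ m', (p m').1 = b
        · rw [if_pos hIb] at hab
          omega
        · rw [if_neg hIb] at hab
          by_cases hKb : ∃ m', (p m').2 = b
          · rw [if_pos hKb] at hab
            obtain ⟨hltb, hatb⟩ := aKF_attain hKb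
            have heq : aKF (fun m' => (p m').2) a = aKF (fun m' => (p m').2) b := by omega
            have hfin : (⟨aKF (fun m' => (p m').2) a, hlta⟩ : Fin M)
                = ⟨aKF (fun m' => (p m').2) b, hltb⟩ := Fin.ext heq
            rw [← hata, ← hatb, hfin]
          · rw [if_neg hKb] at hab
            omega
      · rw [if_neg hIa, if_neg hKa] at hab
        by_cases hIb : ∃ m', (p m').1 = b
        · rw [if_pos hIb] at hab
          obtain ⟨hltb, _⟩ := tIF_attain hIb
          omega
        · rw [if_neg hIb] at hab
          by_cases hKb : ∃ m', (p m').2 = b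
          · rw [if_pos hKb] at hab
            obtain ⟨hltb, _⟩ := aKF_attain hKb
            omega
          · rw [if_neg hKb] at hab
            exact Fin.ext (by omega)
  obtain ⟨σ, hσ⟩ := exists_perm_of_key (keyF p) keyinj
  refine ⟨σ, fun m => ⟨⟨hi1 m, fun j hj => ?_⟩, ⟨Finset.mem_inter.mpr ⟨hkS m, hk1 m⟩,
    fun j hj => ?_⟩⟩⟩
  · rcases eq_or_ne j (p m).1 with rfl | hne
    · exact le_refl _
    · exact (hσ _ _).mpr (le_of_lt (R1 m j hj hne))
  · obtain ⟨hjS, hjm⟩ := Finset.mem_inter.mp hj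
    rcases eq_or_ne j (p m).2 with rfl | hne
    · exact le_refl _
    · exact (hσ _ _).mpr (le_of_lt (R2 m j hjS hjm hne))

end Realize

section SumHelpers
set_option linter.unusedSectionVars false
variable {α : Type*} [Fintype α] [DecidableEq α]

lemma sum_ite_and_mem (T : Finset α) (B : α) (hB : B ∈ T) (P : Prop) [Decidable P] (c : ℝ) :
    (∑ k ∈ T, if P ∧ k = B then c else 0) = if P then c else 0 := by
  by_cases h : P <;> simp [h, hB]

lemma sum_pair_ite_mem (T1 T2 : Finset α) (A B : α) (hA : A ∈ T1) (hB : B ∈ T2) (c : ℝ) :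
    (∑ i ∈ T1, ∑ k ∈ T2, if i = A ∧ k = B then c else 0) = c := by
  have h1 : ∀ i ∈ T1, (∑ k ∈ T2, if i = A ∧ k = B then c else 0)
      = if i = A then c else 0 := fun i _ => by by_cases h : i = A <;> simp [h, hB]
  rw [Finset.sum_congr rfl h1]
  simp [hA]

lemma sum_pair_ite_mem' (T1 T2 : Finset α) (A B : α) (hA : A ∈ T1) (hB : B ∈ T2) (c : ℝ)
    (F : α → ℝ) :
    (∑ i ∈ T1, ∑ k ∈ T2, if i = A ∧ k = B then F k * c else 0) = F B * c := by
  have h1 : ∀ i ∈ T1, (∑ k ∈ T2, if i = A ∧ k = B then F k * c else 0)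
      = if i = A then F B * c else 0 := fun i _ => by by_cases h : i = A <;> simp [h, hB]
  rw [Finset.sum_congr rfl h1]
  simp [hA]

lemma ite_sum_push {β : Type*} (P : Prop) [Decidable P] (s : Finset β) (G : β → ℝ) :
    (if P then (∑ x ∈ s, G x) else 0) = ∑ x ∈ s, if P then G x else 0 := by
  by_cases h : P <;> simp [h]

lemma ite_ite_eq {P Q R : Prop} [Decidable P] [Decidable Q] [Decidable R] (c : ℝ)
    (h1 : Q → P) (h2 : Q ↔ R) :
    (if P then (if Q then c else 0) else 0) = if R then c else 0 := by
  by_cases hq : Q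
  · rw [if_pos (h1 hq), if_pos hq, if_pos (h2.mp hq)]
  · rw [if_neg (fun hr => hq (h2.mpr hr))]
    by_cases hp : P
    · rw [if_pos hp, if_neg hq]
    · rw [if_neg hp]

lemma ite_ite_zero {P Q : Prop} [Decidable P] [Decidable Q] (c : ℝ) (h : ¬Q) :
    (if P then (if Q then c else 0) else 0) = 0 := by
  by_cases hp : P
  · rw [if_pos hp, if_neg h]
  · rw [if_neg hp]

end SumHelpers

section Dir1
set_option linter.unusedSectionVars false
set_option linter.unusedVariables false
variable {n M : ℕ}

lemma Bm_succ (Sm : Fin M → Finset (Fin (n + 1))) (m : Fin M) (h : (m : ℕ) + 1 < M) :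
    Bm Sm ⟨(m : ℕ) + 1, h⟩ = Sm ⟨(m : ℕ) + 1, h⟩ \ Sm m := by
  rw [Bm, if_neg (by simp)]
  have h1 : (⟨((⟨(m : ℕ) + 1, h⟩ : Fin M) : ℕ) - 1,
      lt_of_le_of_lt (Nat.sub_le _ _) (Fin.isLt _)⟩ : Fin M) = m := Fin.ext (by simp)
  rw [h1]

lemma Bm_zero (Sm : Fin M → Finset (Fin (n + 1))) (m : Fin M) (h : (m : ℕ) = 0) :
    Bm Sm m = Sm m := by
  rw [Bm, if_pos h]

/-- Direction 1: from a choice model to a feasible flow with the same objective value. -/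
lemma dir1 (hM : 1 ≤ M)
    (r : Fin (n + 1) → ℝ) (hr : StrictMono r)
    (Sm : Fin M → Finset (Fin (n + 1))) (hSm0 : ∀ m, (0 : Fin (n + 1)) ∈ Sm m)
    (hnested : ∀ m m' : Fin M, m < m' → Sm m ⊂ Sm m')
    (hlastS : Sm ⟨M - 1, Nat.sub_lt hM Nat.one_pos⟩ = Finset.univ)
    (v : Fin M → Fin (n + 1) → ℝ) (η : ℝ)
    (S : Finset (Fin (n + 1))) (hS : (S ∩ Sm ⟨0, hM⟩).Nonempty)
    (lam : Equiv.Perm (Fin (n + 1)) → ℝ) (hlam : lam ∈ Uset Sm v η) :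
    ∃ (f : Fin M → Fin (n + 1) → Fin (n + 1) → Fin (n + 1) → Fin (n + 1) → ℝ)
      (g : Fin M → Fin (n + 1) → Fin (n + 1) → ℝ),
    (∀ (m : Fin M) (h : (m : ℕ) + 1 < M) (i k i' k' : Fin (n + 1)),
      Emem Sm r m i k ⟨(m : ℕ) + 1, h⟩ i' k' → 0 ≤ f m i k i' k') ∧
    (∀ (m : Fin M) (i k : Fin (n + 1)), Vmem Sm m i k → 0 ≤ g m i k) ∧
    (∀ m : Fin M, ∀ i ∈ Sm m, |(∑ k ∈ Sm m, g m i k) - v m i| ≤ η) ∧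
    (∀ (m : Fin M) (h : (m : ℕ) + 1 < M) (i k : Fin (n + 1)), Vmem Sm m i k →
      (∑ i' : Fin (n + 1), ∑ k' : Fin (n + 1),
        if Emem Sm r m i k ⟨(m : ℕ) + 1, h⟩ i' k' then f m i k i' k' else 0)
        = g m i k) ∧
    (∀ m : Fin M, 1 ≤ (m : ℕ) → ∀ i k : Fin (n + 1), Vmem Sm m i k →
      (∑ i' : Fin (n + 1), ∑ k' : Fin (n + 1),
        if Emem Sm r ⟨(m : ℕ) - 1, lt_of_le_of_lt (Nat.sub_le _ _) m.isLt⟩ i' k' m i k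
        then f ⟨(m : ℕ) - 1, lt_of_le_of_lt (Nat.sub_le _ _) m.isLt⟩ i' k' i k else 0)
        = g m i k) ∧
    (∀ (m : Fin M) (i k : Fin (n + 1)), Vmem Sm m i k →
      i ∈ S → i ∈ Bm Sm m → r k ≠ r i → g m i k = 0) ∧
    (∀ (m : Fin M) (i k : Fin (n + 1)), Vmem Sm m i k →
      i ∈ S → i ∉ Bm Sm m → (∃ j ∈ Bm Sm m, r k = r j) → g m i k = 0) ∧
    (∀ (m : Fin M) (i k : Fin (n + 1)), Vmem Sm m i k →
      (∃ j ∈ Bm Sm m \ S, r k = r j) → g m i k = 0) ∧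
    (∑ i ∈ Sm ⟨M - 1, Nat.sub_lt hM Nat.one_pos⟩,
      ∑ k ∈ Sm ⟨M - 1, Nat.sub_lt hM Nat.one_pos⟩,
        g ⟨M - 1, Nat.sub_lt hM Nat.one_pos⟩ i k) = 1 ∧
    expRev r lam S = ∑ i ∈ Sm ⟨M - 1, Nat.sub_lt hM Nat.one_pos⟩,
          ∑ k ∈ Sm ⟨M - 1, Nat.sub_lt hM Nat.one_pos⟩,
            r k * g ⟨M - 1, Nat.sub_lt hM Nat.one_pos⟩ i k := by
  classical
  obtain ⟨⟨hlam0, hlam1⟩, hlamv⟩ := hlam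
  have hmono : ∀ m m' : Fin M, m ≤ m' → Sm m ⊆ Sm m' := by
    intro m m' h
    rcases eq_or_lt_of_le h with rfl | h
    · exact subset_rfl
    · exact (hnested m m' h).subset
  have hSmne : ∀ m, (Sm m).Nonempty := fun m => ⟨0, hSm0 m⟩
  have hSSmne : ∀ m : Fin M, (S ∩ Sm m).Nonempty := by
    intro m
    obtain ⟨a, ha⟩ := hS
    obtain ⟨h1, h2⟩ := Finset.mem_inter.mp ha
    exact ⟨a, Finset.mem_inter.mpr ⟨h1, hmono ⟨0, hM⟩ m (Fin.le_def.mpr (Nat.zero_le _)) h2⟩⟩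
  set t1 : Equiv.Perm (Fin (n + 1)) → Fin M → Fin (n + 1) :=
    fun σ m => topOf σ (Sm m) (hSmne m) with ht1def
  set t2 : Equiv.Perm (Fin (n + 1)) → Fin M → Fin (n + 1) :=
    fun σ m => topOf σ (S ∩ Sm m) (hSSmne m) with ht2def
  have ht1mem : ∀ σ m, t1 σ m ∈ Sm m := fun σ m => topOf_mem σ (hSmne m)
  have ht2memS : ∀ σ m, t2 σ m ∈ S := fun σ m =>
    (Finset.mem_inter.mp (topOf_mem σ (hSSmne m))).1
  have ht2memSm : ∀ σ m, t2 σ m ∈ Sm m := fun σ m =>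
    (Finset.mem_inter.mp (topOf_mem σ (hSSmne m))).2
  have hikt : ∀ σ m, t1 σ m ∈ S → t2 σ m = t1 σ m := by
    intro σ m hmem
    refine isTop_unique (isTop_topOf σ (hSSmne m))
      ⟨Finset.mem_inter.mpr ⟨hmem, ht1mem σ m⟩, fun j hj => ?_⟩
    exact (isTop_topOf σ (hSmne m)).2 j (Finset.mem_inter.mp hj).2
  have hEtop : ∀ σ (m : Fin M) (h : (m : ℕ) + 1 < M),
      Emem Sm r m (t1 σ m) (t2 σ m) ⟨(m : ℕ) + 1, h⟩
        (t1 σ ⟨(m : ℕ) + 1, h⟩) (t2 σ ⟨(m : ℕ) + 1, h⟩) := by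
    intro σ m h
    have hsub : Sm m ⊆ Sm ⟨(m : ℕ) + 1, h⟩ := hmono _ _ (Fin.le_def.mpr (by simpa using Nat.le_succ (m : ℕ)))
    refine ⟨⟨ht1mem σ m, ht2memSm σ m⟩, ⟨ht1mem σ _, ht2memSm σ _⟩, rfl, ?_, ?_⟩
    · by_cases hmem : t1 σ ⟨(m : ℕ) + 1, h⟩ ∈ Sm m
      · exact Or.inl (topOf_eq_of_mem (hSmne m) (hSmne _) hsub hmem)
      · refine Or.inr ?_
        rw [Bm_succ Sm m h]
        exact Finset.mem_sdiff.mpr ⟨ht1mem σ _, hmem⟩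
    · by_cases hmem : t2 σ ⟨(m : ℕ) + 1, h⟩ ∈ S ∩ Sm m
      · exact Or.inl (congrArg r (topOf_eq_of_mem (hSSmne m) (hSSmne _)
          (Finset.inter_subset_inter subset_rfl hsub) hmem))
      · refine Or.inr ⟨t2 σ ⟨(m : ℕ) + 1, h⟩, ?_, rfl⟩
        rw [Bm_succ Sm m h]
        refine Finset.mem_sdiff.mpr ⟨ht2memSm σ _, fun hc => hmem ?_⟩
        exact Finset.mem_inter.mpr ⟨ht2memS σ _, hc⟩
  set ff : Fin M → Fin (n + 1) → Fin (n + 1) → Fin (n + 1) → Fin (n + 1) → ℝ :=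
    fun m i k i' k' => if h : (m : ℕ) + 1 < M then
      (∑ σ : Equiv.Perm (Fin (n + 1)), if i = t1 σ m ∧ k = t2 σ m ∧
        i' = t1 σ ⟨(m : ℕ) + 1, h⟩ ∧ k' = t2 σ ⟨(m : ℕ) + 1, h⟩ then lam σ else 0) else 0
    with hffdef
  set gg : Fin M → Fin (n + 1) → Fin (n + 1) → ℝ :=
    fun m i k => ∑ σ : Equiv.Perm (Fin (n + 1)), if i = t1 σ m ∧ k = t2 σ m then lam σ else 0
    with hggdef
  refine ⟨ff, gg, ?_, ?_, ?_, ?_, ?_, ?_, ?_, ?_, ?_, ?_⟩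
  · -- f nonneg
    intro m h i k i' k' _
    simp only [hffdef]
    rw [dif_pos h]
    refine Finset.sum_nonneg fun σ _ => ?_
    split
    · exact hlam0 σ
    · exact le_rfl
  · -- g nonneg
    intro m i k _
    simp only [hggdef]
    refine Finset.sum_nonneg fun σ _ => ?_
    split
    · exact hlam0 σ
    · exact le_rfl
  · -- data consistency
    intro m i hi
    simp only [hggdef]
    have hsum : (∑ k ∈ Sm m, ∑ σ : Equiv.Perm (Fin (n + 1)),
        if i = t1 σ m ∧ k = t2 σ m then lam σ else 0) = choiceProb lam (Sm m) i := by
      rw [Finset.sum_comm, choiceProb]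
      refine Finset.sum_congr rfl fun σ _ => ?_
      rw [sum_ite_and_mem (Sm m) (t2 σ m) (ht2memSm σ m) (i = t1 σ m) (lam σ)]
      congr 1
      rw [eq_iff_iff]
      exact (isTop_iff_eq_topOf (hSmne m)).symm
    rw [hsum]
    exact hlamv m i hi
  · -- out-conservation
    intro m h i k _
    simp only [hffdef, hggdef]
    have hf : ∀ i' k' : Fin (n + 1), (if Emem Sm r m i k ⟨(m : ℕ) + 1, h⟩ i' k' then
        (if h' : (m : ℕ) + 1 < M then
          (∑ σ : Equiv.Perm (Fin (n + 1)), if i = t1 σ m ∧ k = t2 σ m ∧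
            i' = t1 σ ⟨(m : ℕ) + 1, h'⟩ ∧ k' = t2 σ ⟨(m : ℕ) + 1, h'⟩ then lam σ else 0) else 0)
        else 0)
        = ∑ σ : Equiv.Perm (Fin (n + 1)),
            if Emem Sm r m i k ⟨(m : ℕ) + 1, h⟩ i' k' then
              (if i = t1 σ m ∧ k = t2 σ m ∧
                i' = t1 σ ⟨(m : ℕ) + 1, h⟩ ∧ k' = t2 σ ⟨(m : ℕ) + 1, h⟩ then lam σ else 0)
            else 0 := by
      intro i' k'
      rw [dif_pos h, ite_sum_push]
    rw [Finset.sum_congr rfl fun i' _ => Finset.sum_congr rfl fun k' _ => hf i' k']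
    rw [Finset.sum_congr rfl fun i' _ => Finset.sum_comm, Finset.sum_comm]
    refine Finset.sum_congr rfl fun σ _ => ?_
    by_cases hik : i = t1 σ m ∧ k = t2 σ m
    · rw [if_pos hik]
      have hterm : ∀ i' k' : Fin (n + 1), (if Emem Sm r m i k ⟨(m : ℕ) + 1, h⟩ i' k' then
          (if i = t1 σ m ∧ k = t2 σ m ∧
            i' = t1 σ ⟨(m : ℕ) + 1, h⟩ ∧ k' = t2 σ ⟨(m : ℕ) + 1, h⟩ then lam σ else 0)
          else 0)
          = if i' = t1 σ ⟨(m : ℕ) + 1, h⟩ ∧ k' = t2 σ ⟨(m : ℕ) + 1, h⟩ then lam σ else 0 := by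
        intro i' k'
        refine ite_ite_eq (lam σ) ?_ ?_
        · rintro ⟨e1, e2, e3, e4⟩
          rw [e1, e2, e3, e4]
          exact hEtop σ m h
        · exact ⟨fun hq => ⟨hq.2.2.1, hq.2.2.2⟩, fun hr => ⟨hik.1, hik.2, hr.1, hr.2⟩⟩
      rw [Finset.sum_congr rfl fun i' _ => Finset.sum_congr rfl fun k' _ => hterm i' k']
      exact sum_pair_ite_mem Finset.univ Finset.univ _ _ (Finset.mem_univ _)
        (Finset.mem_univ _) (lam σ)
    · rw [if_neg hik]
      refine Finset.sum_eq_zero fun i' _ => Finset.sum_eq_zero fun k' _ => ?_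
      exact ite_ite_zero (lam σ) (fun hq => hik ⟨hq.1, hq.2.1⟩)
  · -- in-conservation
    intro m h1m i k _
    simp only [hffdef, hggdef]
    have hmp1 : ((m : ℕ) - 1) + 1 < M := by omega
    set mp : Fin M := ⟨(m : ℕ) - 1, lt_of_le_of_lt (Nat.sub_le _ _) m.isLt⟩ with hmp
    have hmp1' : (mp : ℕ) + 1 < M := hmp1
    have hmpm : (⟨(mp : ℕ) + 1, hmp1'⟩ : Fin M) = m := Fin.ext (by simp [hmp]; omega)
    have hf : ∀ i' k' : Fin (n + 1), (if Emem Sm r mp i' k' m i k then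
        (if h' : (mp : ℕ) + 1 < M then
          (∑ σ : Equiv.Perm (Fin (n + 1)), if i' = t1 σ mp ∧ k' = t2 σ mp ∧
            i = t1 σ ⟨(mp : ℕ) + 1, h'⟩ ∧ k = t2 σ ⟨(mp : ℕ) + 1, h'⟩ then lam σ else 0) else 0)
        else 0)
        = ∑ σ : Equiv.Perm (Fin (n + 1)),
            if Emem Sm r mp i' k' m i k then
              (if i' = t1 σ mp ∧ k' = t2 σ mp ∧ i = t1 σ m ∧ k = t2 σ m then lam σ else 0)
            else 0 := by
      intro i' k'
      rw [dif_pos hmp1', hmpm, ite_sum_push]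
    rw [Finset.sum_congr rfl fun i' _ => Finset.sum_congr rfl fun k' _ => hf i' k']
    rw [Finset.sum_congr rfl fun i' _ => Finset.sum_comm, Finset.sum_comm]
    refine Finset.sum_congr rfl fun σ _ => ?_
    by_cases hik : i = t1 σ m ∧ k = t2 σ m
    · rw [if_pos hik]
      have hE0 : Emem Sm r mp (t1 σ mp) (t2 σ mp) m (t1 σ m) (t2 σ m) := by
        have := hEtop σ mp hmp1'
        rw [hmpm] at this
        exact this
      have hterm : ∀ i' k' : Fin (n + 1), (if Emem Sm r mp i' k' m i k then
          (if i' = t1 σ mp ∧ k' = t2 σ mp ∧ i = t1 σ m ∧ k = t2 σ m then lam σ else 0)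
          else 0)
          = if i' = t1 σ mp ∧ k' = t2 σ mp then lam σ else 0 := by
        intro i' k'
        refine ite_ite_eq (lam σ) ?_ ?_
        · rintro ⟨e1, e2, e3, e4⟩
          rw [e1, e2, e3, e4]
          exact hE0
        · exact ⟨fun hq => ⟨hq.1, hq.2.1⟩, fun hr => ⟨hr.1, hr.2, hik.1, hik.2⟩⟩
      rw [Finset.sum_congr rfl fun i' _ => Finset.sum_congr rfl fun k' _ => hterm i' k']
      exact sum_pair_ite_mem Finset.univ Finset.univ _ _ (Finset.mem_univ _)
        (Finset.mem_univ _) (lam σ)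
    · rw [if_neg hik]
      refine Finset.sum_eq_zero fun i' _ => Finset.sum_eq_zero fun k' _ => ?_
      exact ite_ite_zero (lam σ) (fun hq => hik ⟨hq.2.2.1, hq.2.2.2⟩)
  · -- support constraint 1
    intro m i k _ hiS hiB hrk
    simp only [hggdef]
    refine Finset.sum_eq_zero fun σ _ => ?_
    rw [if_neg]
    rintro ⟨h1, h2⟩
    have h3 : t2 σ m = t1 σ m := hikt σ m (h1 ▸ hiS)
    exact hrk (by rw [h2, h3, ← h1])
  · -- support constraint 2
    intro m i k _ hiS hiB hex
    obtain ⟨j, hjB, hrj⟩ := hex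
    simp only [hggdef]
    refine Finset.sum_eq_zero fun σ _ => ?_
    rw [if_neg]
    rintro ⟨h1, h2⟩
    have h3 : t2 σ m = t1 σ m := hikt σ m (h1 ▸ hiS)
    have h4 : k = i := by rw [h2, h3, ← h1]
    have h5 : i = j := hr.injective (by rw [← h4]; exact hrj)
    exact hiB (h5 ▸ hjB)
  · -- support constraint 3
    intro m i k _ hex
    obtain ⟨j, hjB, hrj⟩ := hex
    obtain ⟨hjB', hjS⟩ := Finset.mem_sdiff.mp hjB
    simp only [hggdef]
    refine Finset.sum_eq_zero fun σ _ => ?_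
    rw [if_neg]
    rintro ⟨h1, h2⟩
    have hkj : k = j := hr.injective hrj
    have hkinS : k ∈ S := by rw [h2]; exact ht2memS σ m
    exact hjS (hkj ▸ hkinS)
  · -- total mass one
    simp only [hggdef]
    rw [Finset.sum_congr rfl fun i _ => Finset.sum_comm, Finset.sum_comm]
    rw [Finset.sum_congr rfl fun σ _ => sum_pair_ite_mem _ _ _ _
      (ht1mem σ ⟨M - 1, Nat.sub_lt hM Nat.one_pos⟩)
      (ht2memSm σ ⟨M - 1, Nat.sub_lt hM Nat.one_pos⟩) (lam σ)]
    exact hlam1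
  · -- objective value
    simp only [hggdef]
    have hSne : S.Nonempty := by
      obtain ⟨a, ha⟩ := hS
      exact ⟨a, (Finset.mem_inter.mp ha).1⟩
    have hSinter : S ∩ Sm ⟨M - 1, Nat.sub_lt hM Nat.one_pos⟩ = S := by
      rw [hlastS]
      exact Finset.inter_univ S
    have htop : ∀ σ, t2 σ ⟨M - 1, Nat.sub_lt hM Nat.one_pos⟩ = topOf σ S hSne :=
      fun σ => topOf_congr _ _ hSinter
    have hgfac : ∀ (i k : Fin (n + 1)) (σ : Equiv.Perm (Fin (n + 1))),
        r k * (if i = t1 σ ⟨M - 1, Nat.sub_lt hM Nat.one_pos⟩ ∧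
          k = t2 σ ⟨M - 1, Nat.sub_lt hM Nat.one_pos⟩ then lam σ else 0)
        = if i = t1 σ ⟨M - 1, Nat.sub_lt hM Nat.one_pos⟩ ∧
          k = t2 σ ⟨M - 1, Nat.sub_lt hM Nat.one_pos⟩ then r k * lam σ else 0 := by
      intro i k σ
      by_cases hc : i = t1 σ ⟨M - 1, Nat.sub_lt hM Nat.one_pos⟩ ∧
          k = t2 σ ⟨M - 1, Nat.sub_lt hM Nat.one_pos⟩
      · rw [if_pos hc, if_pos hc]
      · rw [if_neg hc, if_neg hc, mul_zero]
    have hrhs : (∑ i ∈ Sm ⟨M - 1, Nat.sub_lt hM Nat.one_pos⟩,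
        ∑ k ∈ Sm ⟨M - 1, Nat.sub_lt hM Nat.one_pos⟩,
          r k * ∑ σ : Equiv.Perm (Fin (n + 1)),
            if i = t1 σ ⟨M - 1, Nat.sub_lt hM Nat.one_pos⟩ ∧
              k = t2 σ ⟨M - 1, Nat.sub_lt hM Nat.one_pos⟩ then lam σ else 0)
        = ∑ σ : Equiv.Perm (Fin (n + 1)), r (topOf σ S hSne) * lam σ := by
      have hone : ∀ (i k : Fin (n + 1)),
          r k * (∑ σ : Equiv.Perm (Fin (n + 1)),
            if i = t1 σ ⟨M - 1, Nat.sub_lt hM Nat.one_pos⟩ ∧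
              k = t2 σ ⟨M - 1, Nat.sub_lt hM Nat.one_pos⟩ then lam σ else 0)
          = ∑ σ : Equiv.Perm (Fin (n + 1)),
            if i = t1 σ ⟨M - 1, Nat.sub_lt hM Nat.one_pos⟩ ∧
              k = t2 σ ⟨M - 1, Nat.sub_lt hM Nat.one_pos⟩ then r k * lam σ else 0 := by
        intro i k
        rw [Finset.mul_sum]
        exact Finset.sum_congr rfl fun σ _ => hgfac i k σ
      rw [Finset.sum_congr rfl fun i _ => Finset.sum_congr rfl fun k _ => hone i k]
      rw [Finset.sum_congr rfl fun i _ => Finset.sum_comm, Finset.sum_comm]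
      refine Finset.sum_congr rfl fun σ _ => ?_
      rw [sum_pair_ite_mem' _ _ _ _
        (ht1mem σ ⟨M - 1, Nat.sub_lt hM Nat.one_pos⟩)
        (ht2memSm σ ⟨M - 1, Nat.sub_lt hM Nat.one_pos⟩) (lam σ) r]
      rw [htop σ]
    rw [hrhs, expRev]
    have h1 : ∀ i ∈ S, r i * choiceProb lam S i
        = ∑ σ : Equiv.Perm (Fin (n + 1)), if i = topOf σ S hSne then r i * lam σ else 0 := by
      intro i _
      rw [choiceProb, Finset.mul_sum]
      refine Finset.sum_congr rfl fun σ _ => ?_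
      by_cases hc : isTop σ S i
      · rw [if_pos hc, if_pos ((isTop_iff_eq_topOf hSne).mp hc)]
      · rw [if_neg hc, if_neg (fun hh => hc ((isTop_iff_eq_topOf hSne).mpr hh)), mul_zero]
    rw [Finset.sum_congr rfl h1, Finset.sum_comm]
    refine Finset.sum_congr rfl fun σ _ => ?_
    rw [Finset.sum_ite_eq' S (topOf σ S hSne) (fun i => r i * lam σ),
      if_pos (topOf_mem σ hSne)]

end Dir1

section Dir2
set_option linter.unusedSectionVars false
set_option linter.unusedVariables false
variable {n M : ℕ}

lemma expRev_topOf (r : Fin (n + 1) → ℝ) (lam : Equiv.Perm (Fin (n + 1)) → ℝ)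
    (S : Finset (Fin (n + 1))) (hSne : S.Nonempty) :
    expRev r lam S = ∑ σ : Equiv.Perm (Fin (n + 1)), r (topOf σ S hSne) * lam σ := by
  classical
  rw [expRev]
  have h1 : ∀ i ∈ S, r i * choiceProb lam S i
      = ∑ σ : Equiv.Perm (Fin (n + 1)), if i = topOf σ S hSne then r i * lam σ else 0 := by
    intro i _
    rw [choiceProb, Finset.mul_sum]
    refine Finset.sum_congr rfl fun σ _ => ?_
    by_cases hc : isTop σ S i
    · rw [if_pos hc, if_pos ((isTop_iff_eq_topOf hSne).mp hc)]
    · rw [if_neg hc, if_neg (fun hh => hc ((isTop_iff_eq_topOf hSne).mpr hh)), mul_zero]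
  rw [Finset.sum_congr rfl h1, Finset.sum_comm]
  refine Finset.sum_congr rfl fun σ _ => ?_
  rw [Finset.sum_ite_eq' S (topOf σ S hSne) (fun i => r i * lam σ),
    if_pos (topOf_mem σ hSne)]

/-- Direction 2: from a feasible flow to a choice model with the same objective value. -/
lemma dir2 (hM : 1 ≤ M)
    (r : Fin (n + 1) → ℝ) (hr : StrictMono r)
    (Sm : Fin M → Finset (Fin (n + 1))) (hSm0 : ∀ m, (0 : Fin (n + 1)) ∈ Sm m)
    (hnested : ∀ m m' : Fin M, m < m' → Sm m ⊂ Sm m')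
    (hlastS : Sm ⟨M - 1, Nat.sub_lt hM Nat.one_pos⟩ = Finset.univ)
    (v : Fin M → Fin (n + 1) → ℝ) (η : ℝ)
    (S : Finset (Fin (n + 1))) (hS : (S ∩ Sm ⟨0, hM⟩).Nonempty)
    (f : Fin M → Fin (n + 1) → Fin (n + 1) → Fin (n + 1) → Fin (n + 1) → ℝ)
    (g : Fin M → Fin (n + 1) → Fin (n + 1) → ℝ)
    (h1 : ∀ (m : Fin M) (h : (m : ℕ) + 1 < M) (i k i' k' : Fin (n + 1)),
      Emem Sm r m i k ⟨(m : ℕ) + 1, h⟩ i' k' → 0 ≤ f m i k i' k')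
    (h2 : ∀ (m : Fin M) (i k : Fin (n + 1)), Vmem Sm m i k → 0 ≤ g m i k)
    (h3 : ∀ m : Fin M, ∀ i ∈ Sm m, |(∑ k ∈ Sm m, g m i k) - v m i| ≤ η)
    (h4 : ∀ (m : Fin M) (h : (m : ℕ) + 1 < M) (i k : Fin (n + 1)), Vmem Sm m i k →
      (∑ i' : Fin (n + 1), ∑ k' : Fin (n + 1),
        if Emem Sm r m i k ⟨(m : ℕ) + 1, h⟩ i' k' then f m i k i' k' else 0)
        = g m i k)
    (h5 : ∀ m : Fin M, 1 ≤ (m : ℕ) → ∀ i k : Fin (n + 1), Vmem Sm m i k →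
      (∑ i' : Fin (n + 1), ∑ k' : Fin (n + 1),
        if Emem Sm r ⟨(m : ℕ) - 1, lt_of_le_of_lt (Nat.sub_le _ _) m.isLt⟩ i' k' m i k
        then f ⟨(m : ℕ) - 1, lt_of_le_of_lt (Nat.sub_le _ _) m.isLt⟩ i' k' i k else 0)
        = g m i k)
    (h6 : ∀ (m : Fin M) (i k : Fin (n + 1)), Vmem Sm m i k →
      i ∈ S → i ∈ Bm Sm m → r k ≠ r i → g m i k = 0)
    (h7 : ∀ (m : Fin M) (i k : Fin (n + 1)), Vmem Sm m i k →
      i ∈ S → i ∉ Bm Sm m → (∃ j ∈ Bm Sm m, r k = r j) → g m i k = 0)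
    (h8 : ∀ (m : Fin M) (i k : Fin (n + 1)), Vmem Sm m i k →
      (∃ j ∈ Bm Sm m \ S, r k = r j) → g m i k = 0)
    (h9 : (∑ i ∈ Sm ⟨M - 1, Nat.sub_lt hM Nat.one_pos⟩,
      ∑ k ∈ Sm ⟨M - 1, Nat.sub_lt hM Nat.one_pos⟩,
        g ⟨M - 1, Nat.sub_lt hM Nat.one_pos⟩ i k) = 1) :
    ∃ lam ∈ Uset Sm v η,
      expRev r lam S = ∑ i ∈ Sm ⟨M - 1, Nat.sub_lt hM Nat.one_pos⟩,
        ∑ k ∈ Sm ⟨M - 1, Nat.sub_lt hM Nat.one_pos⟩,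
          r k * g ⟨M - 1, Nat.sub_lt hM Nat.one_pos⟩ i k := by
  classical
  obtain ⟨N, rfl⟩ : ∃ N, M = N + 1 := ⟨M - 1, by omega⟩
  have hmono : ∀ m m' : Fin (N + 1), m ≤ m' → Sm m ⊆ Sm m' := by
    intro m m' h
    rcases eq_or_lt_of_le h with rfl | h
    · exact subset_rfl
    · exact (hnested m m' h).subset
  have hSne : S.Nonempty := by
    obtain ⟨a, ha⟩ := hS
    exact ⟨a, (Finset.mem_inter.mp ha).1⟩
  have hlast' : Sm ⟨N, Nat.lt_succ_self N⟩ = Finset.univ := hlastS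
  set mu0 : Fin (n + 1) × Fin (n + 1) → ℝ :=
    fun x => if Vmem Sm ⟨0, hM⟩ x.1 x.2 then g ⟨0, hM⟩ x.1 x.2 else 0 with hmu0def
  set T : ℕ → Fin (n + 1) × Fin (n + 1) → Fin (n + 1) × Fin (n + 1) → ℝ :=
    fun m x y => if h : m + 1 < N + 1 then
      (if Emem Sm r ⟨m, Nat.lt_of_succ_lt h⟩ x.1 x.2 ⟨m + 1, h⟩ y.1 y.2 ∧
          g ⟨m, Nat.lt_of_succ_lt h⟩ x.1 x.2 ≠ 0
        then f ⟨m, Nat.lt_of_succ_lt h⟩ x.1 x.2 y.1 y.2 / g ⟨m, Nat.lt_of_succ_lt h⟩ x.1 x.2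
        else 0)
      else 0 with hTdef
  have hmu0nn : ∀ x, 0 ≤ mu0 x := by
    intro x
    simp only [hmu0def]
    split
    · exact h2 _ _ _ (by assumption)
    · exact le_rfl
  have hTnn : ∀ m x y, 0 ≤ T m x y := by
    intro m x y
    simp only [hTdef]
    split
    · split
      · rename_i hlt hc
        exact div_nonneg (h1 _ hlt _ _ _ _ hc.1) (h2 _ _ _ hc.1.1)
      · exact le_rfl
    · exact le_rfl
  -- identification of the forward marginals
  have hMu : ∀ (m : ℕ) (hm : m < N + 1) (x : Fin (n + 1) × Fin (n + 1)),
      chainMu mu0 T m x = if Vmem Sm ⟨m, hm⟩ x.1 x.2 then g ⟨m, hm⟩ x.1 x.2 else 0 := by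
    intro m
    induction m with
    | zero => intro hm x; rfl
    | succ m ih =>
      intro hm x
      have hm' : m < N + 1 := Nat.lt_of_succ_lt hm
      show (∑ z, chainMu mu0 T m z * T m z x) = _
      have hterm : ∀ z, chainMu mu0 T m z * T m z x
          = if Emem Sm r ⟨m, hm'⟩ z.1 z.2 ⟨m + 1, hm⟩ x.1 x.2
            then f ⟨m, hm'⟩ z.1 z.2 x.1 x.2 else 0 := by
        intro z
        rw [ih hm']
        simp only [hTdef]
        rw [dif_pos hm]
        by_cases hE : Emem Sm r ⟨m, hm'⟩ z.1 z.2 ⟨m + 1, hm⟩ x.1 x.2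
        · have hV : Vmem Sm ⟨m, hm'⟩ z.1 z.2 := hE.1
          by_cases hg : g ⟨m, hm'⟩ z.1 z.2 = 0
          · have hf0 : f ⟨m, hm'⟩ z.1 z.2 x.1 x.2 = 0 := by
              have hout := h4 ⟨m, hm'⟩ hm z.1 z.2 hV
              rw [hg] at hout
              have hz : ∀ i' ∈ Finset.univ, (0:ℝ) ≤ ∑ k' : Fin (n + 1),
                  if Emem Sm r ⟨m, hm'⟩ z.1 z.2 ⟨m + 1, hm⟩ i' k'
                  then f ⟨m, hm'⟩ z.1 z.2 i' k' else 0 := by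
                intro i' _
                refine Finset.sum_nonneg fun k' _ => ?_
                split
                · rename_i hEE
                  exact h1 _ hm _ _ _ _ hEE
                · exact le_rfl
              have hrow := (Finset.sum_eq_zero_iff_of_nonneg hz).mp hout x.1 (Finset.mem_univ _)
              have hz2 : ∀ k' ∈ Finset.univ,
                  (0:ℝ) ≤ (if Emem Sm r ⟨m, hm'⟩ z.1 z.2 ⟨m + 1, hm⟩ x.1 k'
                  then f ⟨m, hm'⟩ z.1 z.2 x.1 k' else 0) := by
                intro k' _
                split
                · rename_i hEE
                  exact h1 _ hm _ _ _ _ hEE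
                · exact le_rfl
              have hcell := (Finset.sum_eq_zero_iff_of_nonneg hz2).mp hrow x.2 (Finset.mem_univ _)
              rw [if_pos hE] at hcell
              exact hcell
            rw [if_pos hV,
              if_neg (show ¬(Emem Sm r ⟨m, hm'⟩ z.1 z.2 ⟨m + 1, hm⟩ x.1 x.2 ∧
                g ⟨m, hm'⟩ z.1 z.2 ≠ 0) from fun hc => hc.2 hg),
              mul_zero, if_pos hE, hf0]
          · rw [if_pos hV,
              if_pos (show (Emem Sm r ⟨m, hm'⟩ z.1 z.2 ⟨m + 1, hm⟩ x.1 x.2 ∧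
                g ⟨m, hm'⟩ z.1 z.2 ≠ 0) from ⟨hE, hg⟩),
              if_pos hE, mul_comm, div_mul_cancel₀ _ hg]
        · have hno : ¬(Emem Sm r ⟨m, hm'⟩ z.1 z.2 ⟨m + 1, hm⟩ x.1 x.2 ∧
              g ⟨m, hm'⟩ z.1 z.2 ≠ 0) := fun hc => hE hc.1
          by_cases hV : Vmem Sm ⟨m, hm'⟩ z.1 z.2
          · rw [if_pos hV, if_neg hno, mul_zero, if_neg hE]
          · rw [if_neg hV, if_neg hno, mul_zero, if_neg hE]
      rw [Finset.sum_congr rfl fun z _ => hterm z]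
      by_cases hVx : Vmem Sm ⟨m + 1, hm⟩ x.1 x.2
      · rw [if_pos hVx]
        have hin := h5 ⟨m + 1, hm⟩ (by exact Nat.succ_le_succ (Nat.zero_le m)) x.1 x.2 hVx
        calc (∑ z : Fin (n + 1) × Fin (n + 1),
              if Emem Sm r ⟨m, hm'⟩ z.1 z.2 ⟨m + 1, hm⟩ x.1 x.2
              then f ⟨m, hm'⟩ z.1 z.2 x.1 x.2 else 0)
            = ∑ i' : Fin (n + 1), ∑ k' : Fin (n + 1),
              if Emem Sm r ⟨m, hm'⟩ i' k' ⟨m + 1, hm⟩ x.1 x.2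
              then f ⟨m, hm'⟩ i' k' x.1 x.2 else 0 := Fintype.sum_prod_type _
          _ = g ⟨m + 1, hm⟩ x.1 x.2 := hin
      · rw [if_neg hVx]
        refine Finset.sum_eq_zero fun z _ => ?_
        exact if_neg (fun hE => hVx hE.2.1)
  -- transition rows sum to one on the support
  have hrow1 : ∀ (m : ℕ) (x : Fin (n + 1) × Fin (n + 1)), m < N →
      chainMu mu0 T m x ≠ 0 → (∑ y, T m x y) = 1 := by
    intro m x hmN hmu
    have hm : m < N + 1 := Nat.lt_of_lt_of_le hmN (Nat.le_succ N)
    have hm1 : m + 1 < N + 1 := Nat.succ_lt_succ hmN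
    rw [hMu m hm x] at hmu
    have hV : Vmem Sm ⟨m, hm⟩ x.1 x.2 := by
      by_contra hc
      rw [if_neg hc] at hmu
      exact hmu rfl
    rw [if_pos hV] at hmu
    have hterm : ∀ y, T m x y = (if Emem Sm r ⟨m, hm⟩ x.1 x.2 ⟨m + 1, hm1⟩ y.1 y.2
        then f ⟨m, hm⟩ x.1 x.2 y.1 y.2 else 0) / g ⟨m, hm⟩ x.1 x.2 := by
      intro y
      simp only [hTdef]
      rw [dif_pos hm1]
      by_cases hE : Emem Sm r ⟨m, hm⟩ x.1 x.2 ⟨m + 1, hm1⟩ y.1 y.2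
      · rw [if_pos ⟨hE, hmu⟩, if_pos hE]
      · rw [if_neg (fun hc => hE hc.1), if_neg hE, zero_div]
    rw [Finset.sum_congr rfl fun y _ => hterm y, ← Finset.sum_div]
    have hout := h4 ⟨m, hm⟩ hm1 x.1 x.2 hV
    calc (∑ y : Fin (n + 1) × Fin (n + 1),
          if Emem Sm r ⟨m, hm⟩ x.1 x.2 ⟨m + 1, hm1⟩ y.1 y.2
          then f ⟨m, hm⟩ x.1 x.2 y.1 y.2 else 0) / g ⟨m, hm⟩ x.1 x.2
        = (∑ i' : Fin (n + 1), ∑ k' : Fin (n + 1),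
            if Emem Sm r ⟨m, hm⟩ x.1 x.2 ⟨m + 1, hm1⟩ i' k'
            then f ⟨m, hm⟩ x.1 x.2 i' k' else 0) / g ⟨m, hm⟩ x.1 x.2 := by
          rw [Fintype.sum_prod_type]
      _ = g ⟨m, hm⟩ x.1 x.2 / g ⟨m, hm⟩ x.1 x.2 := by rw [hout]
      _ = 1 := div_self hmu
  -- every positive-weight path uses only feasible edges
  have hedge : ∀ (p : Fin (N + 1) → Fin (n + 1) × Fin (n + 1)),
      pathW mu0 T N p ≠ 0 → ∀ (m : ℕ) (h : m + 1 < N + 1),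
      Emem Sm r ⟨m, Nat.lt_of_succ_lt h⟩ (p ⟨m, Nat.lt_of_succ_lt h⟩).1
          (p ⟨m, Nat.lt_of_succ_lt h⟩).2 ⟨m + 1, h⟩ (p ⟨m + 1, h⟩).1 (p ⟨m + 1, h⟩).2 ∧
        f ⟨m, Nat.lt_of_succ_lt h⟩ (p ⟨m, Nat.lt_of_succ_lt h⟩).1 (p ⟨m, Nat.lt_of_succ_lt h⟩).2
          (p ⟨m + 1, h⟩).1 (p ⟨m + 1, h⟩).2 ≠ 0 := by
    intro p hp m h
    rw [pathW] at hp
    have hfac := Finset.prod_ne_zero_iff.mp (mul_ne_zero_iff.mp hp).2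
      ⟨m, Nat.lt_of_succ_lt_succ h⟩ (Finset.mem_univ _)
    simp only [hTdef] at hfac
    simp only [Fin.castSucc_mk, Fin.succ_mk, Fin.val_mk] at hfac
    rw [dif_pos (show m + 1 < N + 1 from h)] at hfac
    by_cases hc : Emem Sm r ⟨m, Nat.lt_of_succ_lt h⟩ (p ⟨m, Nat.lt_of_succ_lt h⟩).1
        (p ⟨m, Nat.lt_of_succ_lt h⟩).2 ⟨m + 1, h⟩ (p ⟨m + 1, h⟩).1 (p ⟨m + 1, h⟩).2 ∧
        g ⟨m, Nat.lt_of_succ_lt h⟩ (p ⟨m, Nat.lt_of_succ_lt h⟩).1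
          (p ⟨m, Nat.lt_of_succ_lt h⟩).2 ≠ 0
    · refine ⟨hc.1, fun hf0 => ?_⟩
      rw [if_pos hc, hf0, zero_div] at hfac
      exact hfac rfl
    · rw [if_neg hc] at hfac
      exact absurd rfl hfac
  -- vertices along a positive-weight path carry positive flow
  have hgVg : ∀ p, pathW mu0 T N p ≠ 0 → ∀ (m : ℕ) (hm : m < N + 1),
      Vmem Sm ⟨m, hm⟩ (p ⟨m, hm⟩).1 (p ⟨m, hm⟩).2 ∧
        g ⟨m, hm⟩ (p ⟨m, hm⟩).1 (p ⟨m, hm⟩).2 ≠ 0 := by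
    intro p hp m
    induction m with
    | zero =>
      intro hm
      have hmu := (mul_ne_zero_iff.mp (by rw [pathW] at hp; exact hp)).1
      simp only [hmu0def] at hmu
      by_cases hV : Vmem Sm ⟨0, hM⟩ (p 0).1 (p 0).2
      · rw [if_pos hV] at hmu
        exact ⟨hV, hmu⟩
      · rw [if_neg hV] at hmu
        exact absurd rfl hmu
    | succ m ih =>
      intro hm
      have hm' : m < N + 1 := Nat.lt_of_succ_lt hm
      obtain ⟨hE, hf⟩ := hedge p hp m hm
      refine ⟨hE.2.1, ?_⟩
      intro hg0
      have hfpos : 0 < f ⟨m, hm'⟩ (p ⟨m, hm'⟩).1 (p ⟨m, hm'⟩).2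
          (p ⟨m + 1, hm⟩).1 (p ⟨m + 1, hm⟩).2 :=
        lt_of_le_of_ne (h1 ⟨m, hm'⟩ hm _ _ _ _ hE) (Ne.symm hf)
      have hin := h5 ⟨m + 1, hm⟩ (Nat.succ_le_succ (Nat.zero_le m))
        (p ⟨m + 1, hm⟩).1 (p ⟨m + 1, hm⟩).2 hE.2.1
      rw [hg0] at hin
      have hz : ∀ i' ∈ Finset.univ, (0:ℝ) ≤ ∑ k' : Fin (n + 1),
          if Emem Sm r ⟨m, hm'⟩ i' k' ⟨m + 1, hm⟩ (p ⟨m + 1, hm⟩).1 (p ⟨m + 1, hm⟩).2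
          then f ⟨m, hm'⟩ i' k' (p ⟨m + 1, hm⟩).1 (p ⟨m + 1, hm⟩).2 else 0 := by
        intro i' _
        refine Finset.sum_nonneg fun k' _ => ?_
        split
        · rename_i hEE
          exact h1 _ hm _ _ _ _ hEE
        · exact le_rfl
      have hrow := (Finset.sum_eq_zero_iff_of_nonneg hz).mp hin (p ⟨m, hm'⟩).1 (Finset.mem_univ _)
      have hz2 : ∀ k' ∈ Finset.univ, (0:ℝ) ≤
          (if Emem Sm r ⟨m, hm'⟩ (p ⟨m, hm'⟩).1 k' ⟨m + 1, hm⟩ (p ⟨m + 1, hm⟩).1 (p ⟨m + 1, hm⟩).2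
          then f ⟨m, hm'⟩ (p ⟨m, hm'⟩).1 k' (p ⟨m + 1, hm⟩).1 (p ⟨m + 1, hm⟩).2 else 0) := by
        intro k' _
        split
        · rename_i hEE
          exact h1 _ hm _ _ _ _ hEE
        · exact le_rfl
      have hcell := (Finset.sum_eq_zero_iff_of_nonneg hz2).mp hrow (p ⟨m, hm'⟩).2 (Finset.mem_univ _)
      rw [if_pos hE] at hcell
      exact hfpos.ne' hcell
  have Bm_succ' : ∀ (m : ℕ) (h : m + 1 < N + 1),
      Bm Sm ⟨m + 1, h⟩ = Sm ⟨m + 1, h⟩ \ Sm ⟨m, Nat.lt_of_succ_lt h⟩ :=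
    fun m h => Bm_succ Sm ⟨m, Nat.lt_of_succ_lt h⟩ h
  -- second components lie in S
  have hkS : ∀ p, pathW mu0 T N p ≠ 0 → ∀ (m : ℕ) (hm : m < N + 1), (p ⟨m, hm⟩).2 ∈ S := by
    intro p hp m
    induction m with
    | zero =>
      intro hm
      by_contra hns
      obtain ⟨hV, hg⟩ := hgVg p hp 0 hm
      refine hg (h8 ⟨0, hm⟩ _ _ hV ⟨(p ⟨0, hm⟩).2, ?_, rfl⟩)
      rw [Bm_zero Sm ⟨0, hm⟩ rfl]
      exact Finset.mem_sdiff.mpr ⟨hV.2, hns⟩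
    | succ m ih =>
      intro hm
      have hm' : m < N + 1 := Nat.lt_of_succ_lt hm
      obtain ⟨hE, _⟩ := hedge p hp m hm
      obtain ⟨hV1, hg1⟩ := hgVg p hp (m + 1) hm
      rcases hE.2.2.2.2 with hrk | ⟨j, hjB, hrj⟩
      · have hkk : (p ⟨m + 1, hm⟩).2 = (p ⟨m, hm'⟩).2 := hr.injective hrk
        rw [hkk]
        exact ih hm'
      · have hkj : (p ⟨m + 1, hm⟩).2 = j := hr.injective hrj
        by_contra hns
        refine hg1 (h8 ⟨m + 1, hm⟩ _ _ hV1 ⟨j, ?_, hrj⟩)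
        exact Finset.mem_sdiff.mpr ⟨hjB, fun hjS => hns (by rw [hkj]; exact hjS)⟩
  -- if the first component is in S, the second equals it
  have hikp : ∀ p, pathW mu0 T N p ≠ 0 → ∀ (m : ℕ) (hm : m < N + 1),
      (p ⟨m, hm⟩).1 ∈ S → (p ⟨m, hm⟩).2 = (p ⟨m, hm⟩).1 := by
    intro p hp m
    induction m with
    | zero =>
      intro hm hiS
      obtain ⟨hV, hg⟩ := hgVg p hp 0 hm
      have hiB : (p ⟨0, hm⟩).1 ∈ Bm Sm ⟨0, hm⟩ := by
        rw [Bm_zero Sm ⟨0, hm⟩ rfl]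
        exact hV.1
      by_contra hne
      exact hg (h6 ⟨0, hm⟩ _ _ hV hiS hiB (fun hre => hne (hr.injective hre)))
    | succ m ih =>
      intro hm hiS
      have hm' : m < N + 1 := Nat.lt_of_succ_lt hm
      obtain ⟨hV1, hg1⟩ := hgVg p hp (m + 1) hm
      obtain ⟨hE, _⟩ := hedge p hp m hm
      by_cases hB : (p ⟨m + 1, hm⟩).1 ∈ Bm Sm ⟨m + 1, hm⟩
      · by_contra hne
        exact hg1 (h6 ⟨m + 1, hm⟩ _ _ hV1 hiS hB (fun hre => hne (hr.injective hre)))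
      · have hii : (p ⟨m + 1, hm⟩).1 = (p ⟨m, hm'⟩).1 := by
          rcases hE.2.2.2.1 with hh | hh
          · exact hh
          · exact absurd hh hB
        have hkm : (p ⟨m, hm'⟩).2 = (p ⟨m, hm'⟩).1 := ih hm' (by rw [← hii]; exact hiS)
        rcases hE.2.2.2.2 with hrk | ⟨j, hjB, hrj⟩
        · have hkk : (p ⟨m + 1, hm⟩).2 = (p ⟨m, hm'⟩).2 := hr.injective hrk
          rw [hkk, hkm, ← hii]
        · exact absurd (h7 ⟨m + 1, hm⟩ _ _ hV1 hiS hB ⟨j, hjB, hrj⟩) hg1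
  -- good paths
  set GoodP : (Fin (N + 1) → Fin (n + 1) × Fin (n + 1)) → Prop := fun p =>
    (∀ m : Fin (N + 1), (p m).1 ∈ Sm m) ∧ (∀ m : Fin (N + 1), (p m).2 ∈ Sm m) ∧
    (∀ m : Fin (N + 1), (p m).2 ∈ S) ∧
    (∀ (m : ℕ) (h : m + 1 < N + 1),
      (p ⟨m + 1, h⟩).1 = (p ⟨m, Nat.lt_of_succ_lt h⟩).1 ∨
        (p ⟨m + 1, h⟩).1 ∉ Sm ⟨m, Nat.lt_of_succ_lt h⟩) ∧
    (∀ (m : ℕ) (h : m + 1 < N + 1),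
      (p ⟨m + 1, h⟩).2 = (p ⟨m, Nat.lt_of_succ_lt h⟩).2 ∨
        (p ⟨m + 1, h⟩).2 ∉ Sm ⟨m, Nat.lt_of_succ_lt h⟩) ∧
    (∀ m : Fin (N + 1), (p m).1 ∈ S → (p m).2 = (p m).1) with hGoodPdef
  have hGood : ∀ p, pathW mu0 T N p ≠ 0 → GoodP p := by
    intro p hp
    refine ⟨fun m => ?_, fun m => ?_, fun m => ?_, fun m h => ?_, fun m h => ?_,
      fun m hiS => ?_⟩
    · exact (hgVg p hp m m.isLt).1.1
    · exact (hgVg p hp m m.isLt).1.2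
    · exact hkS p hp m m.isLt
    · obtain ⟨hE, _⟩ := hedge p hp m h
      rcases hE.2.2.2.1 with heq | hB
      · exact Or.inl heq
      · right
        rw [Bm_succ' m h] at hB
        exact (Finset.mem_sdiff.mp hB).2
    · obtain ⟨hE, _⟩ := hedge p hp m h
      rcases hE.2.2.2.2 with hrk | ⟨j, hjB, hrj⟩
      · exact Or.inl (hr.injective hrk)
      · right
        have hkj : (p ⟨m + 1, h⟩).2 = j := hr.injective hrj
        rw [hkj]
        rw [Bm_succ' m h] at hjB
        exact (Finset.mem_sdiff.mp hjB).2
    · exact hikp p hp m m.isLt hiS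
  -- realizing rankings
  set sig : (Fin (N + 1) → Fin (n + 1) × Fin (n + 1)) → Equiv.Perm (Fin (n + 1)) :=
    fun p => if h : GoodP p then Classical.choose
      (realize_exists Sm hmono S p h.1 h.2.1 h.2.2.1 h.2.2.2.1 h.2.2.2.2.1 h.2.2.2.2.2)
    else 1 with hsigdef
  have hsig : ∀ p (h : GoodP p), ∀ m : Fin (N + 1),
      isTop (sig p) (Sm m) (p m).1 ∧ isTop (sig p) (S ∩ Sm m) (p m).2 := by
    intro p h m
    simp only [hsigdef]
    rw [dif_pos h]
    exact Classical.choose_spec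
      (realize_exists Sm hmono S p h.1 h.2.1 h.2.2.1 h.2.2.2.1 h.2.2.2.2.1 h.2.2.2.2.2) m
  -- the choice model
  set lam : Equiv.Perm (Fin (n + 1)) → ℝ := fun σ =>
    ∑ p : Fin (N + 1) → Fin (n + 1) × Fin (n + 1),
      pathW mu0 T N p * (if sig p = σ then 1 else 0) with hlamdef
  have hlam0 : ∀ σ, 0 ≤ lam σ := by
    intro σ
    simp only [hlamdef]
    refine Finset.sum_nonneg fun p _ => mul_nonneg (pathW_nonneg mu0 T hmu0nn hTnn N p) ?_
    split
    · exact zero_le_one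
    · exact le_rfl
  have htransfer : ∀ A : Equiv.Perm (Fin (n + 1)) → ℝ,
      (∑ σ : Equiv.Perm (Fin (n + 1)), A σ * lam σ)
      = ∑ p : Fin (N + 1) → Fin (n + 1) × Fin (n + 1), pathW mu0 T N p * A (sig p) := by
    intro A
    simp only [hlamdef]
    rw [Finset.sum_congr rfl (fun σ _ => Finset.mul_sum _ _ _), Finset.sum_comm]
    refine Finset.sum_congr rfl fun p _ => ?_
    have hterm : ∀ σ, A σ * (pathW mu0 T N p * (if sig p = σ then 1 else 0))
        = if sig p = σ then pathW mu0 T N p * A σ else 0 := by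
      intro σ
      by_cases hc : sig p = σ
      · rw [if_pos hc, if_pos hc, mul_one]
        ring
      · rw [if_neg hc, if_neg hc, mul_zero, mul_zero]
    rw [Finset.sum_congr rfl fun σ _ => hterm σ,
      Finset.sum_ite_eq Finset.univ (sig p) (fun σ => pathW mu0 T N p * A σ),
      if_pos (Finset.mem_univ _)]
  -- choice probabilities agree with the flow
  have hcp : ∀ (m : Fin (N + 1)) (i : Fin (n + 1)), i ∈ Sm m →
      choiceProb lam (Sm m) i = ∑ k ∈ Sm m, g m i k := by
    intro m i hi
    have hm : (m : ℕ) ≤ N := Nat.lt_succ_iff.mp m.isLt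
    have hmeta : (⟨(m : ℕ), Nat.lt_succ_of_le hm⟩ : Fin (N + 1)) = m := Fin.eta m _
    have hA : choiceProb lam (Sm m) i
        = ∑ σ : Equiv.Perm (Fin (n + 1)), (if isTop σ (Sm m) i then (1:ℝ) else 0) * lam σ := by
      rw [choiceProb]
      refine Finset.sum_congr rfl fun σ _ => ?_
      by_cases hc : isTop σ (Sm m) i
      · rw [if_pos hc, if_pos hc, one_mul]
      · rw [if_neg hc, if_neg hc, zero_mul]
    rw [hA, htransfer (fun σ => if isTop σ (Sm m) i then (1:ℝ) else 0)]
    have hpt : ∀ p, pathW mu0 T N p * (if isTop (sig p) (Sm m) i then (1:ℝ) else 0)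
        = pathW mu0 T N p *
          (if (p ⟨(m : ℕ), Nat.lt_succ_of_le hm⟩).1 = i then (1:ℝ) else 0) := by
      intro p
      by_cases hp : pathW mu0 T N p = 0
      · rw [hp, zero_mul, zero_mul]
      · have hG := hGood p hp
        have htops := hsig p hG m
        congr 1
        rw [hmeta]
        by_cases hc : isTop (sig p) (Sm m) i
        · rw [if_pos hc, if_pos (isTop_unique hc htops.1).symm]
        · rw [if_neg hc, if_neg (fun he => hc (by rw [← he]; exact htops.1))]
    rw [Finset.sum_congr rfl fun p _ => hpt p]
    rw [chain_marginal mu0 T hmu0nn hTnn N hrow1 (m : ℕ) hm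
      (fun x => if x.1 = i then (1:ℝ) else 0)]
    have hptx : ∀ x : Fin (n + 1) × Fin (n + 1),
        chainMu mu0 T (m : ℕ) x * (if x.1 = i then (1:ℝ) else 0)
        = if x.1 = i ∧ x.2 ∈ Sm m then g m x.1 x.2 else 0 := by
      intro x
      rw [hMu (m : ℕ) (Nat.lt_succ_of_le hm) x, hmeta]
      by_cases h1x : x.1 = i
      · by_cases h2x : x.2 ∈ Sm m
        · rw [if_pos (show Vmem Sm m x.1 x.2 from ⟨h1x ▸ hi, h2x⟩), if_pos h1x,
            if_pos ⟨h1x, h2x⟩, mul_one]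
        · rw [if_neg (show ¬ Vmem Sm m x.1 x.2 from fun hV => h2x hV.2), zero_mul,
            if_neg (fun hc => h2x hc.2)]
      · rw [if_neg h1x, mul_zero, if_neg (fun hc => h1x hc.1)]
    rw [Finset.sum_congr rfl fun x _ => hptx x, Fintype.sum_prod_type]
    have hcol : ∀ a : Fin (n + 1), (∑ b : Fin (n + 1), if a = i ∧ b ∈ Sm m then g m a b else 0)
        = if a = i then (∑ k ∈ Sm m, g m i k) else 0 := by
      intro a
      by_cases ha : a = i
      · subst ha
        rw [if_pos rfl]
        rw [show (fun b => if a = a ∧ b ∈ Sm m then g m a b else 0)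
          = fun b => if b ∈ Sm m then g m a b else 0 from funext fun b => by
            by_cases hb : b ∈ Sm m <;> simp [hb]]
        simp [Finset.sum_ite_mem]
      · rw [if_neg ha]
        exact Finset.sum_eq_zero fun b _ => if_neg (fun hc => ha hc.1)
    rw [Finset.sum_congr rfl fun a _ => hcol a,
      Finset.sum_ite_eq' Finset.univ i (fun _ => ∑ k ∈ Sm m, g m i k),
      if_pos (Finset.mem_univ _)]
  -- total mass
  have hmass : ∑ σ : Equiv.Perm (Fin (n + 1)), lam σ = 1 := by
    have ht := htransfer (fun _ => 1)
    simp only [one_mul, mul_one] at ht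
    rw [ht]
    have hfin := chain_final mu0 T N (fun _ => 1)
    simp only [mul_one] at hfin
    rw [hfin]
    have hNlt : N < N + 1 := Nat.lt_succ_self N
    have hVuniv : ∀ x : Fin (n + 1) × Fin (n + 1), Vmem Sm ⟨N, hNlt⟩ x.1 x.2 := by
      intro x
      constructor <;> (rw [hlast']; exact Finset.mem_univ _)
    have hgx : ∀ x : Fin (n + 1) × Fin (n + 1),
        chainMu mu0 T N x = g ⟨N, hNlt⟩ x.1 x.2 := by
      intro x
      rw [hMu N hNlt x, if_pos (hVuniv x)]
    rw [Finset.sum_congr rfl fun x _ => hgx x, Fintype.sum_prod_type]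
    rw [hlastS] at h9
    exact h9
  refine ⟨lam, ⟨⟨hlam0, hmass⟩, fun m i hi => ?_⟩, ?_⟩
  · rw [hcp m i hi]
    exact h3 m i hi
  · -- objective value
    rw [expRev_topOf r lam S hSne, htransfer (fun σ => r (topOf σ S hSne))]
    have hNlt : N < N + 1 := Nat.lt_succ_self N
    have hSint : S ∩ Sm ⟨N, hNlt⟩ = S := by rw [hlast']; exact Finset.inter_univ S
    have hpt : ∀ p, pathW mu0 T N p * r (topOf (sig p) S hSne)
        = pathW mu0 T N p * r ((p (Fin.last N)).2) := by
      intro p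
      by_cases hp : pathW mu0 T N p = 0
      · rw [hp, zero_mul, zero_mul]
      · have hG := hGood p hp
        have htops := (hsig p hG ⟨N, hNlt⟩).2
        rw [hSint] at htops
        have : (p ⟨N, hNlt⟩).2 = topOf (sig p) S hSne := (isTop_iff_eq_topOf hSne).mp htops
        rw [← this]
        rfl
    rw [Finset.sum_congr rfl fun p _ => hpt p, chain_final mu0 T N (fun x => r x.2)]
    have hVuniv : ∀ x : Fin (n + 1) × Fin (n + 1), Vmem Sm ⟨N, hNlt⟩ x.1 x.2 := by
      intro x
      constructor <;> (rw [hlast']; exact Finset.mem_univ _)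
    have hgx : ∀ x : Fin (n + 1) × Fin (n + 1),
        chainMu mu0 T N x * r x.2 = r x.2 * g ⟨N, hNlt⟩ x.1 x.2 := by
      intro x
      rw [hMu N hNlt x, if_pos (hVuniv x), mul_comm]
    rw [Finset.sum_congr rfl fun x _ => hgx x, Fintype.sum_prod_type]
    rw [hlastS]
    rfl

end Dir2

/-- Proposition 3 of the paper: for nested past assortments with `S_M = N₀`, the worst-case
expected revenue of an assortment `S` with `S ∩ S_1 ≠ ∅` is the value of a network-flow
optimization problem on the layered graph `(𝔙, 𝔈)`.  A vertex `(m, i, κ)` of `𝔙` is encoded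
as `(m, i, k)` with `κ = r k`, `k ∈ S_m` (the revenues are distinct); `f m i k i' k'` is the
flow on the edge from `(m, i, r k)` to `(m+1, i', r k')` and `g m i k` the flow through
`(m, i, r k)`. -/
theorem statement12 (n M : ℕ) (hn : 1 ≤ n) (hM : 1 ≤ M)
    (r : Fin (n + 1) → ℝ) (hr0 : r 0 = 0) (hr : StrictMono r)
    (Sm : Fin M → Finset (Fin (n + 1))) (hSm0 : ∀ m, (0 : Fin (n + 1)) ∈ Sm m)
    (hnested : ∀ m m' : Fin M, m < m' → Sm m ⊂ Sm m')
    (hlastS : Sm ⟨M - 1, Nat.sub_lt hM Nat.one_pos⟩ = Finset.univ)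
    (v : Fin M → Fin (n + 1) → ℝ) (η : ℝ) (hη : 0 ≤ η)
    (hU : (Uset Sm v η).Nonempty)
    (S : Finset (Fin (n + 1))) (hS : (S ∩ Sm ⟨0, hM⟩).Nonempty) :
    wcRev Sm v η r S =
      sInf {x : ℝ |
        ∃ (f : Fin M → Fin (n + 1) → Fin (n + 1) → Fin (n + 1) → Fin (n + 1) → ℝ)
          (g : Fin M → Fin (n + 1) → Fin (n + 1) → ℝ),
        (∀ (m : Fin M) (h : (m : ℕ) + 1 < M) (i k i' k' : Fin (n + 1)),
          Emem Sm r m i k ⟨(m : ℕ) + 1, h⟩ i' k' → 0 ≤ f m i k i' k') ∧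
        (∀ (m : Fin M) (i k : Fin (n + 1)), Vmem Sm m i k → 0 ≤ g m i k) ∧
        (∀ m : Fin M, ∀ i ∈ Sm m, |(∑ k ∈ Sm m, g m i k) - v m i| ≤ η) ∧
        (∀ (m : Fin M) (h : (m : ℕ) + 1 < M) (i k : Fin (n + 1)), Vmem Sm m i k →
          (∑ i' : Fin (n + 1), ∑ k' : Fin (n + 1),
            if Emem Sm r m i k ⟨(m : ℕ) + 1, h⟩ i' k' then f m i k i' k' else 0)
            = g m i k) ∧
        (∀ m : Fin M, 1 ≤ (m : ℕ) → ∀ i k : Fin (n + 1), Vmem Sm m i k →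
          (∑ i' : Fin (n + 1), ∑ k' : Fin (n + 1),
            if Emem Sm r ⟨(m : ℕ) - 1, lt_of_le_of_lt (Nat.sub_le _ _) m.isLt⟩ i' k' m i k
            then f ⟨(m : ℕ) - 1, lt_of_le_of_lt (Nat.sub_le _ _) m.isLt⟩ i' k' i k else 0)
            = g m i k) ∧
        (∀ (m : Fin M) (i k : Fin (n + 1)), Vmem Sm m i k →
          i ∈ S → i ∈ Bm Sm m → r k ≠ r i → g m i k = 0) ∧
        (∀ (m : Fin M) (i k : Fin (n + 1)), Vmem Sm m i k →
          i ∈ S → i ∉ Bm Sm m → (∃ j ∈ Bm Sm m, r k = r j) → g m i k = 0) ∧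
        (∀ (m : Fin M) (i k : Fin (n + 1)), Vmem Sm m i k →
          (∃ j ∈ Bm Sm m \ S, r k = r j) → g m i k = 0) ∧
        (∑ i ∈ Sm ⟨M - 1, Nat.sub_lt hM Nat.one_pos⟩,
          ∑ k ∈ Sm ⟨M - 1, Nat.sub_lt hM Nat.one_pos⟩,
            g ⟨M - 1, Nat.sub_lt hM Nat.one_pos⟩ i k) = 1 ∧
        x = ∑ i ∈ Sm ⟨M - 1, Nat.sub_lt hM Nat.one_pos⟩,
              ∑ k ∈ Sm ⟨M - 1, Nat.sub_lt hM Nat.one_pos⟩,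
                r k * g ⟨M - 1, Nat.sub_lt hM Nat.one_pos⟩ i k} := by
  classical
  rw [wcRev]
  apply congrArg sInf
  ext b
  constructor
  · rintro ⟨lam, hlam, rfl⟩
    obtain ⟨f, g, c1, c2, c3, c4, c5, c6, c7, c8, c9, c10⟩ :=
      dir1 hM r hr Sm hSm0 hnested hlastS v η S hS lam hlam
    exact ⟨f, g, c1, c2, c3, c4, c5, c6, c7, c8, c9, c10⟩
  · rintro ⟨f, g, c1, c2, c3, c4, c5, c6, c7, c8, c9, rfl⟩
    obtain ⟨lam, hlam, hval⟩ :=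
      dir2 hM r hr Sm hSm0 hnested hlastS v η S hS f g c1 c2 c3 c4 c5 c6 c7 c8 c9
    exact ⟨lam, hlam, hval.symm⟩

end RobustAssortment
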